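/- arXiv:0904.2659 — 5 statements merged into one kernel-verified Lean document; each statement's English description precedes it below -/
import Mathlib

section
/- Let α be an infinite cardinal and let G be a precompact topological group. Then G is α-pseudocompact if and only if G is G_α-dense in its compact completion (which then coincides with the Čech–Stone compactification βG of G). -/
open Cardinal Set Function Topology Pointwise

universe u

/-- A `G_α`-set: an intersection of at most `α` many open sets. -/
def IsGAlphaSet {X : Type u} [TopologicalSpace X] (α : Cardinal.{u}) (S : Set X) : Prop :=
  ∃ 𝒰 : Set (Set X), (∀ U ∈ 𝒰, IsOpen U) ∧ #𝒰 ≤ α ∧ S = ⋂₀ 𝒰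

/-- A subset is `G_α`-dense if it meets every nonempty `G_α`-set. -/
def IsGAlphaDense {X : Type u} [TopologicalSpace X] (α : Cardinal.{u}) (D : Set X) : Prop :=
  ∀ S : Set X, IsGAlphaSet α S → S.Nonempty → (D ∩ S).Nonempty

/-- `α`-pseudocompact: every continuous map to `ℝ^α` has compact range. -/
def IsAlphaPseudocompact (α : Cardinal.{u}) (X : Type u) [TopologicalSpace X] : Prop :=
  ∀ f : X → (α.out → ℝ), Continuous f → IsCompact (Set.range f)

/-- The topological weight: least cardinality of a basis. -/
noncomputable def tweight (X : Type u) [TopologicalSpace X] : Cardinal.{u} :=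
  sInf {c : Cardinal.{u} | ∃ B : Set (Set X), TopologicalSpace.IsTopologicalBasis B ∧ #B = c}

/-- The pseudocharacter: sup over points of the least cardinality of a family of
neighborhoods intersecting in that point. -/
noncomputable def pseudochar (X : Type u) [TopologicalSpace X] : Cardinal.{u} :=
  ⨆ x : X, sInf {c : Cardinal.{u} |
    ∃ 𝒰 : Set (Set X), (∀ U ∈ 𝒰, U ∈ nhds x) ∧ ⋂₀ 𝒰 = {x} ∧ #𝒰 = c}

/-- `s_α`-extremal: no proper dense `α`-pseudocompact subgroup. -/
def IsSAlphaExtremal (α : Cardinal.{u}) (G : Type u) [AddCommGroup G] [TopologicalSpace G] :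
    Prop :=
  ¬ ∃ D : AddSubgroup G, D ≠ ⊤ ∧ Dense (D : Set G) ∧ IsAlphaPseudocompact α D

/-- `r_α`-extremal: no strictly finer `α`-pseudocompact group topology. -/
def IsRAlphaExtremal (α : Cardinal.{u}) (G : Type u) [AddCommGroup G] [t : TopologicalSpace G] :
    Prop :=
  ¬ ∃ t' : TopologicalSpace G, t' < t ∧ @IsTopologicalAddGroup G t' _ ∧
    @IsAlphaPseudocompact α G t'

/-- A divisible abelian group. -/
def IsDivisibleGroup (A : Type u) [AddCommGroup A] : Prop :=
  ∀ a : A, ∀ n : ℕ, 0 < n → ∃ b : A, n • b = a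

/-- The free rank `r₀` of an abelian group. -/
noncomputable def freeRank (A : Type u) [AddCommGroup A] : Cardinal.{u} :=
  Module.rank ℤ A

/-- `d_α`-extremal: all quotients by dense `α`-pseudocompact subgroups are divisible. -/
def IsDAlphaExtremal (α : Cardinal.{u}) (G : Type u) [AddCommGroup G] [TopologicalSpace G] :
    Prop :=
  ∀ D : AddSubgroup G, Dense (D : Set G) → IsAlphaPseudocompact α D →
    IsDivisibleGroup (G ⧸ D)

/-- `c_α`-extremal: all quotients by dense `α`-pseudocompact subgroups have free rank `< 2^α`. -/
def IsCAlphaExtremal (α : Cardinal.{u}) (G : Type u) [AddCommGroup G] [TopologicalSpace G] :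
    Prop :=
  ∀ D : AddSubgroup G, Dense (D : Set G) → IsAlphaPseudocompact α D →
    freeRank (G ⧸ D) < 2 ^ α

/-- `α`-extremal: both `d_α`- and `c_α`-extremal. -/
def IsAlphaExtremal (α : Cardinal.{u}) (G : Type u) [AddCommGroup G] [TopologicalSpace G] :
    Prop :=
  IsDAlphaExtremal α G ∧ IsCAlphaExtremal α G

/-- The homomorphism `x ↦ m • x` of an abelian group. -/
def nsmulHom (m : ℕ) (G : Type u) [AddCommGroup G] : G →+ G :=
  AddMonoidHom.mk' (fun x => m • x) (fun a b => smul_add m a b)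

/-- `α`-singular: `w(mG) ≤ α` for some positive integer `m`. -/
def IsAlphaSingular (α : Cardinal.{u}) (G : Type u) [AddCommGroup G] [TopologicalSpace G] :
    Prop :=
  ∃ m : ℕ, 0 < m ∧ tweight ((nsmulHom m G).range) ≤ α

/-- `Λ_α(G)`: the closed subgroups of the abelian group `G` which are `G_α`-sets. -/
def LambdaAlphaAdd (α : Cardinal.{u}) (G : Type u) [AddCommGroup G] [TopologicalSpace G] :
    Set (AddSubgroup G) :=
  {N | IsClosed (N : Set G) ∧ IsGAlphaSet α (N : Set G)}

/-- The `P_α`-topology: the topology generated by the `G_α`-sets. -/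
def PAlphaTop (α : Cardinal.{u}) (X : Type u) (t : TopologicalSpace X) : TopologicalSpace X :=
  TopologicalSpace.generateFrom {S : Set X | @IsGAlphaSet X t α S}

/-- The Bohr topology on an abelian group: the initial topology of all homomorphisms
to the circle group `𝕋 = ℝ/ℤ`. -/
noncomputable def bohrTopology (G : Type u) [AddCommGroup G] : TopologicalSpace G :=
  ⨅ h : G →+ AddCircle (1 : ℝ), TopologicalSpace.induced h inferInstance

set_option linter.unusedSectionVars false

namespace CRAux


variable {K : Type u} [Group K] [TopologicalSpace K] [IsTopologicalGroup K]

lemma closure_subset_mul {A V : Set K} (hV : IsOpen V) (h1 : (1:K) ∈ V) (hVs : V⁻¹ = V) :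
    closure A ⊆ A * V := by
  intro x hx
  have hxV : IsOpen ((fun v => x * v) '' V) := hV.smul x
  have hmem : x ∈ (fun v => x * v) '' V := ⟨1, h1, by simp⟩
  rcases (mem_closure_iff.mp hx) _ hxV hmem with ⟨a, ⟨⟨v, hv, hva⟩, haA⟩⟩
  refine ⟨a, haA, v⁻¹, ?_, ?_⟩
  · rw [← hVs]; exact Set.inv_mem_inv.mpr hv
  · rw [← hva]; group

lemma exists_conj_invariant [CompactSpace K] {O : Set K} (hO : IsOpen O) (h1 : (1:K) ∈ O) :
    ∃ V : Set K, IsOpen V ∧ (1:K) ∈ V ∧ V ⊆ O ∧ ∀ g : K, ∀ x ∈ V, g * x * g⁻¹ ∈ V := by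
  have hcont : Continuous (fun p : K × K => p.1 * p.2 * p.1⁻¹) := by continuity
  have hn : IsOpen ((fun p : K × K => p.1 * p.2 * p.1⁻¹) ⁻¹' O) := hO.preimage hcont
  have hsub : (univ : Set K) ×ˢ ({1} : Set K) ⊆ (fun p : K × K => p.1 * p.2 * p.1⁻¹) ⁻¹' O := by
    rintro ⟨g, x⟩ ⟨-, hx⟩
    simp only [mem_singleton_iff] at hx
    simp [hx, h1]
  obtain ⟨u, w, hu, hw, huu, hww, huw⟩ :=
    generalized_tube_lemma isCompact_univ isCompact_singleton hn hsub
  set Vt : Set K := {x | ∀ g : K, g * x * g⁻¹ ∈ O} with hVt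
  have hwV : w ⊆ Vt := by
    intro x hxw g
    exact huw (show (g, x) ∈ u ×ˢ w from ⟨huu (mem_univ g), hxw⟩)
  have hVtconj : ∀ g : K, ∀ x ∈ Vt, g * x * g⁻¹ ∈ Vt := by
    intro g x hx h
    have := hx (h * g)
    have he : h * (g * x * g⁻¹) * h⁻¹ = (h * g) * x * (h * g)⁻¹ := by group
    rw [he]; exact this
  refine ⟨interior Vt, isOpen_interior, ?_, ?_, ?_⟩
  · exact mem_interior_iff_mem_nhds.mpr (Filter.mem_of_superset (hw.mem_nhds (hww rfl)) hwV)
  · intro x hx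
    have hxV : x ∈ Vt := interior_subset hx
    have := hxV 1; simpa using this
  · intro g x hx
    -- conj by g is a homeomorphism; image of interior
    have hgi : (Homeomorph.trans (Homeomorph.mulLeft g) (Homeomorph.mulRight g⁻¹)) ''
        interior Vt ⊆ interior Vt := by
      rw [Homeomorph.image_interior]
      apply interior_mono
      intro y ⟨z, hz, hzy⟩
      have : (Homeomorph.trans (Homeomorph.mulLeft g) (Homeomorph.mulRight g⁻¹)) z
          = g * z * g⁻¹ := rfl
      rw [this] at hzy
      rw [← hzy]; exact hVtconj g z hz
    have : g * x * g⁻¹ =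
        (Homeomorph.trans (Homeomorph.mulLeft g) (Homeomorph.mulRight g⁻¹)) x := rfl
    rw [this]
    exact hgi ⟨x, hx, rfl⟩

lemma exists_chain_step [CompactSpace K] {O : Set K} (hO : IsOpen O) (h1 : (1:K) ∈ O) :
    ∃ V : Set K, IsOpen V ∧ (1:K) ∈ V ∧ V⁻¹ = V ∧
      (∀ g : K, ∀ x ∈ V, g * x * g⁻¹ ∈ V) ∧ V * V ⊆ O := by
  obtain ⟨W, hWo, hW1, hWW⟩ := exists_open_nhds_one_mul_subset (hO.mem_nhds h1)
  obtain ⟨V₀, hV₀o, hV₀1, hV₀W, hV₀conj⟩ := exists_conj_invariant hWo hW1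
  refine ⟨V₀ ∩ V₀⁻¹, hV₀o.inter hV₀o.inv, ⟨hV₀1, by simpa using hV₀1⟩, ?_, ?_, ?_⟩
  · ext x; simp only [Set.mem_inv, Set.mem_inter_iff]
    constructor
    · rintro ⟨h1', h2'⟩; exact ⟨by simpa using h2', by simpa using h1'⟩
    · rintro ⟨h1', h2'⟩; exact ⟨by simpa using h2', by simpa using h1'⟩
  · rintro g x ⟨hx1, hx2⟩
    refine ⟨hV₀conj g x hx1, ?_⟩
    have hx2' : x⁻¹ ∈ V₀ := by simpa using hx2
    have := hV₀conj g x⁻¹ hx2'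
    simp only [Set.mem_inv]
    have he : (g * x * g⁻¹)⁻¹ = g * x⁻¹ * g⁻¹ := by group
    rw [he]; exact this
  · intro z hz
    rcases hz with ⟨a, ha, b, hb, hab⟩
    exact hWW ⟨a, hV₀W ha.1, b, hV₀W hb.1, hab⟩

structure Chain (K : Type u) [Group K] [TopologicalSpace K] where
  V : ℕ → Set K
  isOpen : ∀ n, IsOpen (V n)
  one_mem : ∀ n, (1:K) ∈ V n
  symm : ∀ n, (V n)⁻¹ = V n
  conj : ∀ (n : ℕ) (g : K), ∀ x ∈ V n, g * x * g⁻¹ ∈ V n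
  sq : ∀ n, V (n+1) * V (n+1) ⊆ V n

namespace Chain

variable [CompactSpace K]

lemma exists_chain {O : Set K} (hO : IsOpen O) (h1 : (1:K) ∈ O) :
    ∃ c : Chain K, c.V 0 ⊆ O := by
  -- build recursively
  have step : ∀ W : Set K, IsOpen W → (1:K) ∈ W → W⁻¹ = W →
      (∀ g : K, ∀ x ∈ W, g * x * g⁻¹ ∈ W) →
      ∃ W' : Set K, (IsOpen W' ∧ (1:K) ∈ W' ∧ W'⁻¹ = W' ∧
        (∀ g : K, ∀ x ∈ W', g * x * g⁻¹ ∈ W')) ∧ W' * W' ⊆ W := by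
    intro W hWo hW1 _ _
    obtain ⟨V, h1', h2', h3', h4', h5'⟩ := exists_chain_step hWo hW1
    exact ⟨V, ⟨h1', h2', h3', h4'⟩, h5'⟩
  obtain ⟨V0, hV0o, hV01, hV0s, hV0c, hV0sq⟩ := exists_chain_step hO h1
  -- recursive choice
  let P : Set K → Prop := fun W => IsOpen W ∧ (1:K) ∈ W ∧ W⁻¹ = W ∧
    (∀ g : K, ∀ x ∈ W, g * x * g⁻¹ ∈ W)
  have hstep : ∀ W, P W → ∃ W', P W' ∧ W' * W' ⊆ W := by
    intro W hW; exact step W hW.1 hW.2.1 hW.2.2.1 hW.2.2.2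
  choose next hnextP hnextSq using hstep
  let Vseq : ℕ → {W : Set K // P W} := fun n =>
    Nat.rec ⟨V0, hV0o, hV01, hV0s, hV0c⟩ (fun _ prev => ⟨next prev.1 prev.2, hnextP _ _⟩) n
  refine ⟨⟨fun n => (Vseq n).1, fun n => (Vseq n).2.1, fun n => (Vseq n).2.2.1,
      fun n => (Vseq n).2.2.2.1, fun n => (Vseq n).2.2.2.2, fun n => ?_⟩, ?_⟩
  · exact hnextSq _ _
  · intro x hx; exact hV0sq ⟨x, hx, 1, hV01, by simp⟩

variable (c : Chain K)

def N : Set K := ⋂ n, c.V n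

lemma V_succ_subset (n : ℕ) : c.V (n+1) ⊆ c.V n := by
  intro x hx
  have : x * 1 ∈ c.V n := c.sq n ⟨x, hx, 1, c.one_mem _, rfl⟩
  simpa using this

lemma V_mono {m n : ℕ} (h : m ≤ n) : c.V n ⊆ c.V m := by
  induction n with
  | zero => simp_all
  | succ k ih =>
    rcases Nat.lt_or_ge m (k+1) with h' | h'
    · exact (c.V_succ_subset k).trans (ih (Nat.lt_succ_iff.mp h'))
    · have : m = k + 1 := le_antisymm h h'
      subst this; exact fun _ h => h

lemma closure_V_subset (n : ℕ) : closure (c.V (n+1)) ⊆ c.V n :=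
  (closure_subset_mul (c.isOpen (n+1)) (c.one_mem (n+1)) (c.symm (n+1))).trans (c.sq n)

lemma N_subset_V (n : ℕ) : c.N ⊆ c.V n := Set.iInter_subset _ n

lemma N_eq_iInter_closure : c.N = ⋂ n, closure (c.V (n+1)) := by
  apply Set.Subset.antisymm
  · exact Set.subset_iInter fun n => (c.N_subset_V (n+1)).trans subset_closure
  · intro x hx
    apply Set.mem_iInter.mpr
    intro n
    exact c.closure_V_subset n (Set.mem_iInter.mp hx n)

lemma N_closed : IsClosed c.N := by
  rw [c.N_eq_iInter_closure]; exact isClosed_iInter fun n => isClosed_closure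

lemma N_compact : IsCompact c.N := c.N_closed.isCompact

lemma one_mem_N : (1:K) ∈ c.N := Set.mem_iInter.mpr fun n => c.one_mem n

lemma N_mul {x y : K} (hx : x ∈ c.N) (hy : y ∈ c.N) : x * y ∈ c.N := by
  apply Set.mem_iInter.mpr
  intro n
  exact c.sq n ⟨x, Set.mem_iInter.mp hx (n+1), y, Set.mem_iInter.mp hy (n+1), rfl⟩

lemma N_inv {x : K} (hx : x ∈ c.N) : x⁻¹ ∈ c.N := by
  apply Set.mem_iInter.mpr
  intro n
  have := Set.mem_iInter.mp hx n
  rw [← c.symm n]; simpa using this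

lemma N_conj {x : K} (g : K) (hx : x ∈ c.N) : g * x * g⁻¹ ∈ c.N :=
  Set.mem_iInter.mpr fun n => c.conj n g x (Set.mem_iInter.mp hx n)

lemma basis {O : Set K} (hO : IsOpen O) (hNO : c.N ⊆ O) : ∃ n, c.V (n+1) ⊆ O := by
  by_contra h
  push_neg at h
  have hne : ∀ n, (closure (c.V (n+1)) ∩ Oᶜ).Nonempty := by
    intro n
    rcases Set.not_subset.mp (h n) with ⟨x, hx1, hx2⟩
    exact ⟨x, subset_closure hx1, hx2⟩
  have hcl : ∀ n : ℕ, IsClosed (closure (c.V (n+1)) ∩ Oᶜ) :=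
    fun n => isClosed_closure.inter (isClosed_compl_iff.mpr hO)
  have hcp : ∀ n : ℕ, IsCompact (closure (c.V (n+1)) ∩ Oᶜ) := fun n => (hcl n).isCompact
  have hdec : ∀ n : ℕ, closure (c.V (n+1+1)) ∩ Oᶜ ⊆ closure (c.V (n+1)) ∩ Oᶜ :=
    fun n => Set.inter_subset_inter_left _ (closure_mono (c.V_succ_subset (n+1)))
  obtain ⟨x, hx⟩ := IsCompact.nonempty_iInter_of_sequence_nonempty_isCompact_isClosed
    _ hdec hne (hcp 0) hcl
  have hxN : x ∈ c.N := by
    rw [c.N_eq_iInter_closure]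
    exact Set.mem_iInter.mpr fun n => (Set.mem_iInter.mp hx n).1
  exact (Set.mem_iInter.mp hx 0).2 (hNO hxN)


/-- intersection of countably many chains -/
def interSeq (c : ℕ → Chain K) : Chain K where
  V n := ⋂ i ∈ Finset.range (n+1), (c i).V n
  isOpen n := isOpen_biInter_finset fun i _ => (c i).isOpen n
  one_mem n := Set.mem_iInter₂.mpr fun i _ => (c i).one_mem n
  symm n := by
    ext x
    simp only [Set.mem_inv, Set.mem_iInter]
    constructor
    · intro hx i hi
      have := hx i hi
      rw [← (c i).symm n]; simpa using this
    · intro hx i hi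
      have := hx i hi
      rw [← (c i).symm n] at this; simpa using this
  conj n g x hx := by
    apply Set.mem_iInter₂.mpr
    intro i hi
    exact (c i).conj n g x (Set.mem_iInter₂.mp hx i hi)
  sq n := by
    rintro z ⟨a, ha, b, hb, hab⟩
    apply Set.mem_iInter₂.mpr
    intro i hi
    have hi' : i ∈ Finset.range (n+2) := Finset.mem_range.mpr
      (Nat.lt_succ_of_lt (Finset.mem_range.mp hi))
    exact (c i).sq n ⟨a, Set.mem_iInter₂.mp ha i hi', b, Set.mem_iInter₂.mp hb i hi', hab⟩

lemma interSeq_N_subset (c : ℕ → Chain K) (i : ℕ) : (interSeq c).N ⊆ (c i).N := by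
  intro x hx
  apply Set.mem_iInter.mpr
  intro n
  have hx' := Set.mem_iInter.mp hx (max i n)
  have hmem : x ∈ (c i).V (max i n) := Set.mem_iInter₂.mp hx' i
    (Finset.mem_range.mpr (Nat.lt_succ_of_le (le_max_left i n)))
  exact (c i).V_mono (le_max_right i n) hmem

/-- the core of an open set w.r.t. a chain -/
def core (c : Chain K) (U : Set K) : Set K := {y | ∀ x ∈ c.N, y * x ∈ U}

lemma core_subset (c : Chain K) (U : Set K) : c.core U ⊆ U := by
  intro y hy
  have := hy 1 c.one_mem_N
  simpa using this

lemma core_isOpen (c : Chain K) {U : Set K} (hU : IsOpen U) : IsOpen (c.core U) := by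
  rw [isOpen_iff_forall_mem_open]
  intro y hy
  have hsub : ({y} : Set K) ×ˢ c.N ⊆ (fun p : K × K => p.1 * p.2) ⁻¹' U := by
    rintro ⟨a, b⟩ ⟨ha, hb⟩
    simp only [mem_singleton_iff] at ha
    subst ha
    exact hy b hb
  obtain ⟨u, v, hu, hv, hyu, hNv, huv⟩ := generalized_tube_lemma isCompact_singleton
    c.N_compact (hU.preimage continuous_mul) hsub
  refine ⟨u, ?_, hu, hyu rfl⟩
  intro z hz x hx
  exact huv (show (z, x) ∈ u ×ˢ v from ⟨hz, hNv hx⟩)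

lemma core_mono_N {c d : Chain K} (h : d.N ⊆ c.N) (U : Set K) : c.core U ⊆ d.core U :=
  fun _ hy x hx => hy x (h hx)

lemma mem_core_self {U : Set K} (hU : IsOpen U) {z : K} (hz : z ∈ U) :
    ∃ c : Chain K, z ∈ c.core U := by
  have h1 : (1:K) ∈ (fun x => z * x) ⁻¹' U := by simpa using hz
  obtain ⟨c, hc⟩ := exists_chain (K := K) (hU.preimage (continuous_const.mul continuous_id)) h1
  exact ⟨c, fun x hx => hc (c.N_subset_V 0 hx)⟩

lemma core_sat (c : Chain K) {U : Set K} {h y : K} (hh : h ∈ c.N) (hy : y ∈ c.core U) :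
    h * y ∈ c.core U := by
  intro x hx
  have h1 : y⁻¹ * h * y ∈ c.N := by
    have := c.N_conj y⁻¹ hh
    simpa using this
  have h2 : (y⁻¹ * h * y) * x ∈ c.N := c.N_mul h1 hx
  have he : (h * y) * x = y * ((y⁻¹ * h * y) * x) := by group
  rw [he]
  exact hy _ h2

end Chain

open MeasureTheory in
/-- Key saturation lemma: the closure of any open set in a compact group is invariant under
left multiplication by `c.N` for a suitable chain `c`. -/
lemma exists_chain_sat [CompactSpace K] [T2Space K] (U : Set K) (hU : IsOpen U) :
    ∃ c : Chain K, ∀ h ∈ c.N, ∀ x ∈ closure U, h * x ∈ closure U := by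
  classical
  haveI : Nonempty K := ⟨1⟩
  obtain ⟨c₀, -⟩ := Chain.exists_chain (K := K) isOpen_univ (mem_univ 1)
  letI : MeasurableSpace K := borel K
  haveI : BorelSpace K := ⟨rfl⟩
  set μ : Measure K := Measure.haarMeasure (⊤ : TopologicalSpace.PositiveCompacts K) with hμdef
  set s : ENNReal := ⨆ c : Chain K, μ (c.core U) with hs
  have hsfin : s ≠ ⊤ := by
    have h1 : s ≤ μ univ := iSup_le fun c => measure_mono (subset_univ _)
    exact ne_top_of_le_ne_top (IsCompact.measure_lt_top isCompact_univ).ne h1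
  have happrox : ∀ n : ℕ, ∃ c : Chain K, s < μ (c.core U) + (n+1 : ENNReal)⁻¹ := by
    intro n
    by_contra hcon
    push_neg at hcon
    have hεs : (n+1 : ENNReal)⁻¹ ≤ s := le_trans (by simp) (hcon c₀)
    have hle : s ≤ s - (n+1 : ENNReal)⁻¹ :=
      iSup_le fun c => ENNReal.le_sub_of_add_le_right (by simp) (hcon c)
    have hlt : s - (n+1 : ENNReal)⁻¹ < s := by
      apply ENNReal.sub_lt_self hsfin
      · intro h0; rw [h0] at hεs; simp at hεs
      · simp
    exact absurd (hle.trans_lt hlt) (lt_irrefl _)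
  choose cs hcs using happrox
  set U' : Set K := ⋃ n, (cs n).core U with hU'def
  have hU'open : IsOpen U' := isOpen_iUnion fun n => (cs n).core_isOpen hU
  have hU'ge : s ≤ μ U' := by
    apply ENNReal.le_of_forall_pos_le_add
    intro ε hε _
    obtain ⟨n, hn⟩ := ENNReal.exists_inv_nat_lt (a := (ε : ENNReal))
      (by exact_mod_cast hε.ne')
    have key : s ≤ μ U' + (n+1 : ENNReal)⁻¹ :=
      calc s ≤ μ ((cs n).core U) + (n+1 : ENNReal)⁻¹ := (hcs n).le
        _ ≤ μ U' + (n+1 : ENNReal)⁻¹ :=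
            add_le_add (measure_mono (Set.subset_iUnion (fun m => (cs m).core U) n)) le_rfl
    refine key.trans (add_le_add le_rfl ?_)
    calc (n+1 : ENNReal)⁻¹ ≤ (n : ENNReal)⁻¹ := by
          apply ENNReal.inv_le_inv.mpr; exact_mod_cast Nat.le_succ n
      _ ≤ ε := hn.le
  -- the combined chain
  set d : Chain K := Chain.interSeq cs with hd
  have hdsub : ∀ n, d.N ⊆ (cs n).N := fun n => Chain.interSeq_N_subset cs n
  -- U is contained in the closure of U'
  have hUsub : U ⊆ closure U' := by
    by_contra hcon
    rw [Set.not_subset] at hcon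
    obtain ⟨z, hzU, hznot⟩ := hcon
    obtain ⟨cz, hzcore⟩ := Chain.mem_core_self hU hzU
    set W : Set K := cz.core U ∩ (closure U')ᶜ with hWdef
    have hWopen : IsOpen W := (cz.core_isOpen hU).inter isClosed_closure.isOpen_compl
    have hWne : W.Nonempty := ⟨z, hzcore, hznot⟩
    have hWpos : 0 < μ W := hWopen.measure_pos μ hWne
    -- combined chain of cz and all cs
    set cc : Chain K := Chain.interSeq (fun n => Nat.rec cz (fun m _ => cs m) n) with hcc
    have hccz : cc.N ⊆ cz.N := Chain.interSeq_N_subset _ 0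
    have hccn : ∀ n, cc.N ⊆ (cs n).N := fun n => Chain.interSeq_N_subset _ (n+1)
    have hsubcore : U' ∪ W ⊆ cc.core U := by
      apply Set.union_subset
      · apply Set.iUnion_subset
        intro n
        exact Chain.core_mono_N (hccn n) U
      · exact (Set.inter_subset_left).trans (Chain.core_mono_N hccz U)
    have hdisj : Disjoint U' W := by
      apply Set.disjoint_left.mpr
      intro a haU' haW
      exact haW.2 (subset_closure haU')
    have hmeas : μ (U' ∪ W) = μ U' + μ W := by
      apply measure_union hdisj hWopen.measurableSet
    have hge : s + μ W ≤ μ (cc.core U) :=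
      calc s + μ W ≤ μ U' + μ W := add_le_add hU'ge le_rfl
        _ = μ (U' ∪ W) := hmeas.symm
        _ ≤ μ (cc.core U) := measure_mono hsubcore
    have hle' : μ (cc.core U) ≤ s := le_iSup (fun c : Chain K => μ (c.core U)) cc
    have : s + μ W ≤ s := hge.trans hle'
    have hW0 : μ W = 0 := by
      have h2 : μ W ≤ s - s := ENNReal.le_sub_of_add_le_left hsfin this
      simpa using h2
    exact absurd hW0 hWpos.ne'
  have hclUU' : closure U = closure U' := by
    apply Set.Subset.antisymm
    · rw [← closure_closure (s := U')]
      exact closure_mono hUsub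
    · exact closure_mono (Set.iUnion_subset fun n => (cs n).core_subset U)
  -- saturation
  refine ⟨d, ?_⟩
  intro h hh x hx
  rw [hclUU'] at hx ⊢
  have hsatU' : (fun y => h * y) '' U' ⊆ U' := by
    rintro - ⟨y, hy, rfl⟩
    rcases Set.mem_iUnion.mp hy with ⟨n, hyn⟩
    exact Set.mem_iUnion.mpr ⟨n, (cs n).core_sat (hdsub n hh) hyn⟩
  have himg : h * x ∈ (fun y => h * y) '' closure U' := ⟨x, hx, rfl⟩
  have hcl : (fun y => h * y) '' closure U' ⊆ closure U' := by
    have heq : (fun y => h * y) '' closure U' = closure ((fun y => h * y) '' U') :=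
      (Homeomorph.mulLeft h).image_closure U'
    rw [heq]
    exact closure_mono hsatU'
  exact hcl himg

/-- In a compact group, the closure of an open set is a countable intersection of open sets
of the form `U * W n` with `W n` open neighborhoods of `1`. -/
lemma exists_gdelta_closure [CompactSpace K] [T2Space K] (U : Set K) (hU : IsOpen U) :
    ∃ W : ℕ → Set K, (∀ n, IsOpen (W n)) ∧ (∀ n, (1:K) ∈ W n) ∧
      closure U = ⋂ n, U * W n := by
  obtain ⟨c, hsat⟩ := exists_chain_sat U hU
  refine ⟨c.V, c.isOpen, c.one_mem, ?_⟩
  apply Set.Subset.antisymm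
  · exact Set.subset_iInter fun n =>
      closure_subset_mul (c.isOpen n) (c.one_mem n) (c.symm n)
  · intro y hy
    set D : ℕ → Set K := fun n => closure (c.V (n+1)) ∩ {w : K | y * w⁻¹ ∈ closure U}
      with hD
    have hDclosed : ∀ n, IsClosed (D n) := by
      intro n
      apply isClosed_closure.inter
      exact IsClosed.preimage (continuous_const.mul continuous_inv) isClosed_closure
    have hDdec : ∀ n, D (n+1) ⊆ D n := fun n =>
      Set.inter_subset_inter_left _ (closure_mono (c.V_succ_subset (n+1)))
    have hDne : ∀ n, (D n).Nonempty := by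
      intro n
      rcases Set.mem_iInter.mp hy (n+1) with ⟨u, hu, v, hv, huv⟩
      refine ⟨v, subset_closure hv, ?_⟩
      have : y * v⁻¹ = u := by rw [← huv]; group
      simp only [Set.mem_setOf_eq, this]
      exact subset_closure hu
    obtain ⟨w, hw⟩ := IsCompact.nonempty_iInter_of_sequence_nonempty_isCompact_isClosed
      D hDdec hDne (hDclosed 0).isCompact hDclosed
    have hwN : w ∈ c.N := by
      apply Set.mem_iInter.mpr
      intro n
      exact c.closure_V_subset n (Set.mem_iInter.mp hw n).1
    have hyw : y * w⁻¹ ∈ closure U := (Set.mem_iInter.mp hw 0).2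
    -- y = (y * w⁻¹) * w ∈ closure U since closure U is right-invariant under N
    set x : K := y * w⁻¹ with hxdef
    have hconj : x * w * x⁻¹ ∈ c.N := c.N_conj x hwN
    have : (x * w * x⁻¹) * x ∈ closure U := hsat _ hconj x hyw
    have he : (x * w * x⁻¹) * x = y := by rw [hxdef]; group
    rwa [he] at this

section Extension

variable {G : Type u} [Group G] [TopologicalSpace G] [IsTopologicalGroup G]
variable {Kc : Type u} [Group Kc] [TopologicalSpace Kc] [IsTopologicalGroup Kc]
  [T2Space Kc] [CompactSpace Kc]
variable (e : G →* Kc)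

/-- trace-open: an open set of `G` is the trace of an open set of `K`. -/
lemma trace_open (he : Topology.IsEmbedding e) {S : Set G} (hS : IsOpen S) {g : G} (hg : g ∈ S) :
    ∃ Θ : Set Kc, IsOpen Θ ∧ e g ∈ Θ ∧ ∀ w : G, e w ∈ Θ → w ∈ S := by
  obtain ⟨Θ, hΘo, hΘ⟩ := he.toIsInducing.isOpen_iff.mp hS
  exact ⟨Θ, hΘo, by rw [← hΘ] at hg; exact hg, fun w hw => by rw [← hΘ]; exact hw⟩

/-- a patch: the union of all open sets of `K` whose trace on `G` satisfies `p ∘ h`. -/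
def patch (h : G → ℝ) (p : ℝ → Prop) : Set Kc :=
  ⋃₀ {O : Set Kc | IsOpen O ∧ ∀ w : G, e w ∈ O → p (h w)}

lemma patch_isOpen (h : G → ℝ) (p : ℝ → Prop) : IsOpen (patch e h p) :=
  isOpen_sUnion fun _ hO => hO.1

lemma patch_readout {h : G → ℝ} {p : ℝ → Prop} {w : G} (hw : e w ∈ patch e h p) : p (h w) := by
  rcases hw with ⟨O, hO, hwO⟩
  exact hO.2 w hwO

/-- if some trace point of every open `O ∋ x` strictly satisfies an open condition,
then `x` is in the closure of the corresponding patch. -/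
lemma mem_closure_patch (he : Topology.IsEmbedding e) {h : G → ℝ} (hc : Continuous h) {p : ℝ → Prop}
    (hp : IsOpen {t : ℝ | p t}) {x : Kc}
    (hx : ∀ O : Set Kc, IsOpen O → x ∈ O → ∃ u : G, e u ∈ O ∧ p (h u)) :
    x ∈ closure (patch e h p) := by
  rw [mem_closure_iff]
  intro O hOo hxO
  obtain ⟨u, huO, hpu⟩ := hx O hOo hxO
  have hSopen : IsOpen {w : G | p (h w)} := hp.preimage hc
  obtain ⟨Θ, hΘo, heu, hΘtr⟩ := trace_open e he hSopen hpu
  refine ⟨e u, huO, ⟨Θ, ⟨hΘo, fun w hw => hΘtr w hw⟩, heu⟩⟩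

lemma bounded_of_gdelta_dense (he : Topology.IsEmbedding e) (hd : DenseRange e)
    (HGd : ∀ (T : ℕ → Set Kc), (∀ i, IsOpen (T i)) →
      (⋂ i, T i).Nonempty → ∃ g : G, e g ∈ ⋂ i, T i)
    (h : G → ℝ) (hc : Continuous h) : ∃ B : ℝ, ∀ g, |h g| ≤ B := by
  by_contra hb
  push_neg at hb
  set A : ℕ → Set Kc := fun n => patch e h (fun t => (n:ℝ) < |t|) with hA
  have hAopen : ∀ n, IsOpen (A n) := fun n => patch_isOpen e h _
  have hAmono : ∀ n, A (n+1) ⊆ A n := by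
    intro n
    apply Set.sUnion_subset_sUnion
    rintro O ⟨hOo, hOtr⟩
    exact ⟨hOo, fun w hw => lt_trans (by exact_mod_cast Nat.lt_succ_self n) (hOtr w hw)⟩
  have hAne : ∀ n, (A n).Nonempty := by
    intro n
    obtain ⟨g, hg⟩ := hb (n : ℝ)
    have hSopen : IsOpen {w : G | (n:ℝ) < |h w|} :=
      (isOpen_lt continuous_const (continuous_abs.comp hc))
    obtain ⟨Θ, hΘo, heg, hΘtr⟩ := trace_open e he hSopen hg
    exact ⟨e g, ⟨Θ, ⟨hΘo, fun w hw => hΘtr w hw⟩, heg⟩⟩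
  have hclne : (⋂ n, closure (A n)).Nonempty := by
    apply IsCompact.nonempty_iInter_of_sequence_nonempty_isCompact_isClosed
    · exact fun n => closure_mono (hAmono n)
    · exact fun n => (hAne n).closure
    · exact isClosed_closure.isCompact
    · exact fun n => isClosed_closure
  choose W hWopen hW1 hWeq using fun n => exists_gdelta_closure (A n) (hAopen n)
  set T : ℕ → Set Kc := fun k => A (Nat.unpair k).1 * W (Nat.unpair k).1 (Nat.unpair k).2
    with hT
  have hTeq : (⋂ k, T k) = ⋂ n, closure (A n) := by
    have h1 : (⋂ k, T k) = ⋂ q : ℕ × ℕ, A q.1 * W q.1 q.2 :=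
      Function.Surjective.iInter_comp (f := Nat.unpair)
        (fun q => ⟨Nat.pair q.1 q.2, by simp⟩) (fun q => A q.1 * W q.1 q.2)
    have h2 : (⋂ q : ℕ × ℕ, A q.1 * W q.1 q.2) = ⋂ n, ⋂ m, A n * W n m := by
      ext z; simp only [Set.mem_iInter, Prod.forall]
    rw [h1, h2]
    exact Set.iInter_congr fun n => (hWeq n).symm
  obtain ⟨g, hg⟩ := HGd T
    (fun k => (hAopen _).mul_right)
    (by rw [hTeq]; exact hclne)
  rw [hTeq] at hg
  obtain ⟨n, hn⟩ := exists_nat_ge (|h g| + 1)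
  have hSopen : IsOpen {w : G | |h w - h g| < 1} := by
    have : Continuous fun w => |h w - h g| := (hc.sub continuous_const).abs
    exact isOpen_lt this continuous_const
  obtain ⟨Θ, hΘo, heg, hΘtr⟩ := trace_open e he hSopen (by simp : (g:G) ∈ _)
  have hgcl : e g ∈ closure (A n) := Set.mem_iInter.mp hg n
  have hmem : (Θ ∩ A n).Nonempty := mem_closure_iff.mp hgcl Θ hΘo heg
  obtain ⟨u, hu⟩ := hd.exists_mem_open (hΘo.inter (hAopen n)) hmem
  have h1 : |h u - h g| < 1 := hΘtr u hu.1
  have h2 : (n:ℝ) < |h u| := patch_readout e hu.2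
  have : (n:ℝ) < |h g| + 1 := by
    calc (n:ℝ) < |h u| := h2
      _ ≤ |h g| + |h u - h g| := by
          have := abs_sub_abs_le_abs_sub (h u) (h g)
          linarith [abs_sub_abs_le_abs_sub (h u) (h g)]
      _ < |h g| + 1 := by linarith
  linarith

lemma tendsto_of_gdelta_dense (he : Topology.IsEmbedding e) (hd : DenseRange e)
    (HGd : ∀ {ι : Type} [Countable ι] (T : ι → Set Kc), (∀ i, IsOpen (T i)) →
      (⋂ i, T i).Nonempty → ∃ g : G, e g ∈ ⋂ i, T i)
    (h : G → ℝ) (hc : Continuous h) (x : Kc) :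
    ∃ L : ℝ, Filter.Tendsto h (Filter.comap e (𝓝 x)) (𝓝 L) := by
  obtain ⟨B, hB⟩ := bounded_of_gdelta_dense e he hd (fun T => HGd T) h hc
  have di : IsDenseInducing (⇑e) := ⟨he.toIsInducing, hd⟩
  haveI : (Filter.comap (⇑e) (𝓝 x)).NeBot := di.comap_nhds_neBot x
  set F : Filter ℝ := Filter.map h (Filter.comap (⇑e) (𝓝 x)) with hF
  haveI : F.NeBot := Filter.map_neBot
  have hFle : F ≤ Filter.principal (Set.Icc (-B) B) := by
    rw [Filter.le_principal_iff]
    apply Filter.mem_map.mpr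
    apply Filter.univ_mem'
    intro g
    simp only [Set.mem_preimage, Set.mem_Icc]
    constructor <;> [linarith [abs_le.mp (hB g) |>.1]; exact (abs_le.mp (hB g)).2]
  obtain ⟨a, haIcc, ha⟩ := isCompact_Icc.exists_clusterPt hFle
  by_contra hno
  push_neg at hno
  have hnoa : ¬ (F ≤ 𝓝 a) := hno a
  rw [Filter.le_def] at hnoa
  push_neg at hnoa
  obtain ⟨Sa, hSa, hSanot⟩ := hnoa
  obtain ⟨r, hr, hball⟩ := Metric.mem_nhds_iff.mp hSa
  have hballnot : Metric.ball a r ∉ F := fun hmem => hSanot (Filter.mem_of_superset hmem hball)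
  set F' : Filter ℝ := F ⊓ Filter.principal (Metric.ball a r)ᶜ with hF'
  haveI : F'.NeBot := by
    rw [Filter.inf_principal_neBot_iff]
    intro U hU
    by_contra hcon
    rw [Set.not_nonempty_iff_eq_empty] at hcon
    have : U ⊆ Metric.ball a r := by
      intro z hz
      by_contra hzb
      exact absurd (Set.eq_empty_iff_forall_notMem.mp hcon z ⟨hz, hzb⟩) (fun h => h)
    exact hballnot (Filter.mem_of_superset hU this)
  have hcpt : IsCompact (Set.Icc (-B) B ∩ (Metric.ball a r)ᶜ) :=
    isCompact_Icc.inter_right Metric.isOpen_ball.isClosed_compl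
  have hF'le : F' ≤ Filter.principal (Set.Icc (-B) B ∩ (Metric.ball a r)ᶜ) := by
    rw [Filter.le_principal_iff]
    exact Filter.inter_mem (Filter.mem_inf_of_left (Filter.le_principal_iff.mp hFle))
      (Filter.mem_inf_of_right (Filter.mem_principal_self _))
  obtain ⟨b, hbmem, hb'⟩ := hcpt.exists_clusterPt hF'le
  have hbF : ClusterPt b F := hb'.mono inf_le_left
  have hab : a ≠ b := by
    intro hEq
    have : b ∈ Metric.ball a r := by rw [← hEq]; exact Metric.mem_ball_self hr
    exact hbmem.2 this
  set r0 : ℝ := dist a b with hr0def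
  have hr0 : 0 < r0 := dist_pos.mpr hab
  -- cluster point readout
  have hcluster : ∀ (v : ℝ), ClusterPt v F → ∀ O : Set Kc, IsOpen O → x ∈ O →
      ∃ u : G, e u ∈ O ∧ |h u - v| < r0/8 := by
    intro v hv O hOo hxO
    have h1 : Metric.ball v (r0/8) ∈ 𝓝 v := Metric.ball_mem_nhds v (by linarith)
    have h2 : h '' (⇑e ⁻¹' O) ∈ F := by
      apply Filter.image_mem_map
      exact Filter.preimage_mem_comap (hOo.mem_nhds hxO)
    have h3 : (Metric.ball v (r0/8) ∩ h '' (⇑e ⁻¹' O)).Nonempty :=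
      hv.neBot.nonempty_of_mem (Filter.inter_mem (Filter.mem_inf_of_left h1)
        (Filter.mem_inf_of_right h2))
    obtain ⟨t, htb, ⟨u, huO, hut⟩⟩ := h3
    refine ⟨u, huO, ?_⟩
    rw [hut]
    simpa [Real.dist_eq] using htb
  -- x is in the closure of both patches
  have hxa : x ∈ closure (patch e h (fun t => |t - a| < r0/4)) := by
    apply mem_closure_patch e he hc
    · exact isOpen_lt (continuous_abs.comp (continuous_sub_right a)) continuous_const
    · intro O hOo hxO
      obtain ⟨u, huO, hua⟩ := hcluster a ha O hOo hxO
      exact ⟨u, huO, by linarith⟩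
  have hxb : x ∈ closure (patch e h (fun t => |t - b| < r0/4)) := by
    apply mem_closure_patch e he hc
    · exact isOpen_lt (continuous_abs.comp (continuous_sub_right b)) continuous_const
    · intro O hOo hxO
      obtain ⟨u, huO, hub⟩ := hcluster b hbF O hOo hxO
      exact ⟨u, huO, by linarith⟩
  -- build the Gδ family
  set Ua : Set Kc := patch e h (fun t => |t - a| < r0/4) with hUa
  set Ub : Set Kc := patch e h (fun t => |t - b| < r0/4) with hUb
  obtain ⟨Wa, hWao, hWa1, hWaeq⟩ := exists_gdelta_closure Ua (patch_isOpen e h _)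
  obtain ⟨Wb, hWbo, hWb1, hWbeq⟩ := exists_gdelta_closure Ub (patch_isOpen e h _)
  set T : Bool × ℕ → Set Kc := fun q => if q.1 then Ua * Wa q.2 else Ub * Wb q.2 with hT
  have hTeq : (⋂ q, T q) = closure Ua ∩ closure Ub := by
    have heq : (⋂ q : Bool × ℕ, T q) = (⋂ n, Ua * Wa n) ∩ (⋂ n, Ub * Wb n) := by
      ext z
      constructor
      · intro hz
        constructor
        · apply Set.mem_iInter.mpr; intro n
          have := Set.mem_iInter.mp hz (true, n); simpa [hT] using this
        · apply Set.mem_iInter.mpr; intro n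
          have := Set.mem_iInter.mp hz (false, n); simpa [hT] using this
      · intro hz
        apply Set.mem_iInter.mpr
        rintro ⟨bb, n⟩
        cases bb
        · simpa [hT] using Set.mem_iInter.mp hz.2 n
        · simpa [hT] using Set.mem_iInter.mp hz.1 n
    rw [heq, ← hWaeq, ← hWbeq]
  obtain ⟨d, hdmem⟩ := HGd T (by
      rintro ⟨bb, n⟩
      by_cases hbb : bb <;> simp [hT, hbb] <;> exact (patch_isOpen e h _).mul_right)
    (by rw [hTeq]; exact ⟨x, hxa, hxb⟩)
  rw [hTeq] at hdmem
  -- readout at d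
  have hSopen : IsOpen {w : G | |h w - h d| < r0/8} :=
    isOpen_lt ((hc.sub continuous_const).abs) continuous_const
  obtain ⟨Θ, hΘo, hed, hΘtr⟩ := trace_open e he hSopen
    (show d ∈ {w : G | |h w - h d| < r0/8} by
      simp only [Set.mem_setOf_eq, sub_self, abs_zero]; linarith)
  have hra : ∃ u : G, e u ∈ Θ ∩ Ua := by
    have : (Θ ∩ Ua).Nonempty := mem_closure_iff.mp hdmem.1 Θ hΘo hed
    exact hd.exists_mem_open (hΘo.inter (patch_isOpen e h _)) this
  have hrb : ∃ u : G, e u ∈ Θ ∩ Ub := by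
    have : (Θ ∩ Ub).Nonempty := mem_closure_iff.mp hdmem.2 Θ hΘo hed
    exact hd.exists_mem_open (hΘo.inter (patch_isOpen e h _)) this
  obtain ⟨ua, hua⟩ := hra
  obtain ⟨ub, hub⟩ := hrb
  have h1 : |h ua - h d| < r0/8 := hΘtr ua hua.1
  have h2 : |h ua - a| < r0/4 := patch_readout e hua.2
  have h3 : |h ub - h d| < r0/8 := hΘtr ub hub.1
  have h4 : |h ub - b| < r0/4 := patch_readout e hub.2
  have : dist a b < r0 := by
    rw [Real.dist_eq]
    have e1 : |a - b| ≤ |a - h ua| + |h ua - h d| + |h d - h ub| + |h ub - b| := by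
      have := abs_sub_le (a) (h ua) (b)
      calc |a - b| ≤ |a - h d| + |h d - b| := abs_sub_le a (h d) b
        _ ≤ (|a - h ua| + |h ua - h d|) + (|h d - h ub| + |h ub - b|) := by
            gcongr
            · exact abs_sub_le a (h ua) (h d)
            · exact abs_sub_le (h d) (h ub) b
        _ = |a - h ua| + |h ua - h d| + |h d - h ub| + |h ub - b| := by ring
    have e2 : |a - h ua| < r0/4 := by rw [abs_sub_comm]; exact h2
    have e3 : |h d - h ub| < r0/8 := by rw [abs_sub_comm]; exact h3
    linarith
  simp only [hr0def] at this
  linarith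

end Extension

section Main

/-- the main theorem, hard direction -/
theorem main_rev {G Kc : Type u} [Group G] [TopologicalSpace G] [IsTopologicalGroup G]
    [Group Kc] [TopologicalSpace Kc] [IsTopologicalGroup Kc] [T2Space Kc] [CompactSpace Kc]
    (α : Cardinal.{u}) (hα : ℵ₀ ≤ α)
    (e : G →* Kc) (he : Topology.IsEmbedding e) (hd : DenseRange e)
    (hGd : IsGAlphaDense α (Set.range e)) : IsAlphaPseudocompact α G := by
  intro f hf
  have HGd : ∀ {ι : Type} [Countable ι] (T : ι → Set Kc), (∀ i, IsOpen (T i)) →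
      (⋂ i, T i).Nonempty → ∃ g : G, e g ∈ ⋂ i, T i := by
    intro ι _ T hTo hTne
    haveI : Countable ↥(Set.range T) := (Set.countable_range T).to_subtype
    have hset : IsGAlphaSet α (⋂ i, T i) := by
      refine ⟨Set.range T, ?_, ?_, ?_⟩
      · rintro U ⟨i, rfl⟩; exact hTo i
      · exact le_trans Cardinal.mk_le_aleph0 hα
      · rw [Set.sInter_range]
    obtain ⟨y, ⟨⟨g, rfl⟩, hy⟩⟩ := hGd _ hset hTne
    exact ⟨g, hy⟩
  have di : IsDenseInducing (⇑e) := ⟨he.toIsInducing, hd⟩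
  have hLim : ∀ (i : α.out) (x : Kc), ∃ L : ℝ,
      Filter.Tendsto (fun g => f g i) (Filter.comap (⇑e) (𝓝 x)) (𝓝 L) := fun i x =>
    tendsto_of_gdelta_dense e he hd (fun T hTo hTne => HGd T hTo hTne)
      (fun g => f g i) ((continuous_apply i).comp hf) x
  set F : Kc → α.out → ℝ := fun x i => di.extend (fun g => f g i) x with hFdef
  have hFcont : Continuous F := continuous_pi fun i => di.continuous_extend (hLim i)
  have hFe : ∀ g : G, F (e g) = f g := by
    intro g
    funext i
    exact di.extend_eq ((continuous_apply i).comp hf) g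
  have hrange : Set.range f = Set.range F := by
    apply Set.Subset.antisymm
    · rintro - ⟨g, rfl⟩
      exact ⟨e g, hFe g⟩
    · rintro - ⟨x, rfl⟩
      set T : α.out × ℕ → Set Kc := fun p => {y : Kc | |F y p.1 - F x p.1| < 1/(p.2+1)}
        with hT
      have hTo : ∀ p, IsOpen (T p) := fun p =>
        isOpen_lt (((continuous_apply p.1).comp hFcont).sub continuous_const).abs
          continuous_const
      have hxT : x ∈ ⋂ p, T p := Set.mem_iInter.mpr fun p => by
        simp only [hT, Set.mem_setOf_eq, sub_self, abs_zero]
        positivity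
      have hcard : #(Set.range T) ≤ α := by
        refine le_trans Cardinal.mk_range_le ?_
        rw [Cardinal.mk_prod, Cardinal.lift_uzero, Cardinal.mk_out, Cardinal.mk_nat,
          Cardinal.lift_aleph0]
        rw [Cardinal.mul_aleph0_eq hα]
      have hset : IsGAlphaSet α (⋂ p, T p) := by
        refine ⟨Set.range T, ?_, hcard, (Set.sInter_range T).symm⟩
        rintro U ⟨p, rfl⟩; exact hTo p
      obtain ⟨y, ⟨⟨g, rfl⟩, hy⟩⟩ := hGd _ hset ⟨x, hxT⟩
      refine ⟨g, ?_⟩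
      have hFeq : F (e g) = F x := by
        funext i
        by_contra hne
        have hpos : 0 < |F (e g) i - F x i| := by
          apply abs_pos.mpr
          intro h0
          exact hne (sub_eq_zero.mp h0)
        obtain ⟨n, hn⟩ := exists_nat_one_div_lt hpos
        have := Set.mem_iInter.mp hy (i, n)
        simp only [hT, Set.mem_setOf_eq] at this
        have hcast : ((n:ℝ) + 1) = ((n:ℕ):ℝ) + 1 := by norm_num
        linarith
      rw [← hFe g, hFeq]
  rw [hrange]
  exact isCompact_range hFcont

/-- the main theorem, easy direction -/
theorem main_fwd {G Kc : Type u} [Group G] [TopologicalSpace G] [IsTopologicalGroup G]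
    [Group Kc] [TopologicalSpace Kc] [IsTopologicalGroup Kc] [T2Space Kc] [CompactSpace Kc]
    (α : Cardinal.{u}) (e : G →* Kc) (he : Topology.IsEmbedding e) (hd : DenseRange e)
    (hpc : IsAlphaPseudocompact α G) : IsGAlphaDense α (Set.range e) := by
  rintro S ⟨𝒰, hopen, hcard, rfl⟩ ⟨y, hy⟩
  classical
  have hcard' : #↥𝒰 ≤ #(α.out) := by rw [Cardinal.mk_out]; exact hcard
  obtain ⟨ι⟩ := (Cardinal.le_def _ _).mp hcard'
  have hyU : ∀ U : ↥𝒰, y ∈ (U : Set Kc) := fun U => Set.mem_sInter.mp hy U.1 U.2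
  have hF : ∀ U : ↥𝒰, ∃ fc : C(Kc, ℝ), Set.EqOn fc 0 {y} ∧ Set.EqOn fc 1 ((U : Set Kc))ᶜ ∧
      ∀ z, fc z ∈ Set.Icc (0:ℝ) 1 := by
    intro U
    have h2 : IsClosed ((U : Set Kc))ᶜ := (hopen U.1 U.2).isClosed_compl
    have h3 : Disjoint ({y} : Set Kc) ((U : Set Kc))ᶜ := by
      rw [Set.disjoint_left]
      rintro z hz hz2
      rw [Set.mem_singleton_iff] at hz
      subst hz
      exact hz2 (hyU U)
    exact exists_continuous_zero_one_of_isClosed isClosed_singleton h2 h3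
  choose fc hfc0 hfc1 _ using hF
  set f : G → α.out → ℝ := fun x => Function.extend ι (fun U => fc U (e x)) 0 with hfdef
  have hfcont : Continuous f := by
    apply continuous_pi
    intro i
    by_cases hi : ∃ U, ι U = i
    · have heq : (fun x => f x i) = fun x => fc hi.choose (e x) := by
        funext x
        simp only [hfdef]
        rw [Function.extend_def, dif_pos hi]
      rw [heq]
      exact (fc hi.choose).continuous.comp he.continuous
    · have heq : (fun x => f x i) = fun _ => (0:ℝ) := by
        funext x
        simp only [hfdef]
        rw [Function.extend_def, dif_neg hi]
        rfl
      rw [heq]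
      exact continuous_const
  have hcpt := hpc f hfcont
  set H : Kc → α.out → ℝ := fun k => Function.extend ι (fun U => fc U k) 0 with hHdef
  have hHcont : Continuous H := by
    apply continuous_pi
    intro i
    by_cases hi : ∃ U, ι U = i
    · have heq : (fun k => H k i) = fun k => fc hi.choose k := by
        funext k
        simp only [hHdef]
        rw [Function.extend_def, dif_pos hi]
      rw [heq]
      exact (fc hi.choose).continuous
    · have heq : (fun k => H k i) = fun _ => (0:ℝ) := by
        funext k
        simp only [hHdef]
        rw [Function.extend_def, dif_neg hi]
        rfl
      rw [heq]
      exact continuous_const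
  have hHy : H y = 0 := by
    funext i
    by_cases hi : ∃ U, ι U = i
    · simp only [hHdef]
      rw [Function.extend_def, dif_pos hi]
      exact hfc0 hi.choose rfl
    · simp only [hHdef]
      rw [Function.extend_def, dif_neg hi]
  have hmem : H y ∈ closure (Set.range f) := by
    have h1 : H y ∈ H '' closure (Set.range ⇑e) := ⟨y, hd y, rfl⟩
    have h2 : H '' closure (Set.range ⇑e) ⊆ closure (H '' Set.range ⇑e) :=
      image_closure_subset_closure_image hHcont
    have h3 : H '' Set.range ⇑e = Set.range f := by
      rw [← Set.range_comp]
      rfl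
    rw [← h3]
    exact h2 h1
  rw [(hcpt.isClosed).closure_eq] at hmem
  obtain ⟨x, hx⟩ := hmem
  refine ⟨e x, ⟨x, rfl⟩, ?_⟩
  apply Set.mem_sInter.mpr
  intro U hU
  have h1 : f x (ι ⟨U, hU⟩) = fc ⟨U, hU⟩ (e x) := by
    simp only [hfdef]
    exact Function.Injective.extend_apply ι.injective _ _ _
  have h2 : f x (ι ⟨U, hU⟩) = 0 := by
    rw [hx, hHy]
    rfl
  by_contra hnot
  have h3 : fc ⟨U, hU⟩ (e x) = 1 := hfc1 ⟨U, hU⟩ hnot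
  rw [h1, h3] at h2
  exact one_ne_zero h2

end Main

end CRAux

/-- A precompact group `G` (given here with its compact completion `K`,
i.e. a compact group in which `G` embeds densely) is `α`-pseudocompact iff `G` is
`G_α`-dense in `K`. -/
theorem statement_3 (α : Cardinal.{u}) (hα : ℵ₀ ≤ α) (G K : Type u) [Group G]
    [TopologicalSpace G] [IsTopologicalGroup G] [T2Space G]
    [Group K] [TopologicalSpace K] [IsTopologicalGroup K] [T2Space K] [CompactSpace K]
    (e : G →* K) (he : IsEmbedding e) (hd : DenseRange e) :
    IsAlphaPseudocompact α G ↔ IsGAlphaDense α (Set.range e) := by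
  constructor
  · intro hpc
    exact CRAux.main_fwd α e he hd hpc
  · intro hGd
    exact CRAux.main_rev α hα e he hd hGd
end

section
/- Let α be an infinite cardinal and let (G, τ) be a compact topological group (not necessarily abelian) of weight ≤ α. Then (G, τ) is both s_α-extremal and r_α-extremal. -/
open Cardinal Set Function Topology Pointwise
open scoped Uniformity

universe u

private def SepAux (G : Type u) : Type u := G

private lemma dist_cont_aux {X : Type u} (m : PseudoMetricSpace X) (x : X) :
    @Continuous X ℝ m.toUniformSpace.toTopologicalSpace _ (fun b => @dist _ m.toDist x b) := by
  letI := m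
  exact continuous_const.dist continuous_id

private lemma dist_self_aux {X : Type u} (m : PseudoMetricSpace X) (x : X) :
    @dist _ m.toDist x x = 0 := by
  letI := m; exact dist_self x

private lemma dist_comm_aux {X : Type u} (m : PseudoMetricSpace X) (x y : X) :
    @dist _ m.toDist x y = @dist _ m.toDist y x := by
  letI := m; exact dist_comm x y

lemma group_separation {G : Type u} [Group G] [τ : TopologicalSpace G] [IsTopologicalGroup G]
    {U : Set G} {x : G} (hU : IsOpen U) (hx : x ∈ U) :
    ∃ g : G → ℝ, Continuous g ∧ g x = 0 ∧ ∃ ε : ℝ, 0 < ε ∧ ∀ b, b ∉ U → ε ≤ g b := by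
  classical
  have hN : (fun v : G => v * x) ⁻¹' U ∈ 𝓝 (1 : G) := by
    apply (continuous_mul_right x).continuousAt.preimage_mem_nhds
    simpa using hU.mem_nhds hx
  have step : ∀ W : Set G, W ∈ 𝓝 (1 : G) →
      ∃ W' : Set G, (W' ∈ 𝓝 (1 : G) ∧ W'⁻¹ = W') ∧ W' * W' ⊆ W := by
    intro W hW
    obtain ⟨V, hV, _, hVs, hVm⟩ := exists_closed_nhds_one_inv_eq_mul_subset hW
    exact ⟨V, ⟨hV, hVs⟩, hVm⟩
  obtain ⟨W0, hW0mem, hW0symm, hW0sub⟩ :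
      ∃ W0 : Set G, W0 ∈ 𝓝 (1 : G) ∧ W0⁻¹ = W0 ∧ W0 ⊆ (fun v : G => v * x) ⁻¹' U := by
    obtain ⟨V, ⟨hV, hVs⟩, hVm⟩ := step _ hN
    refine ⟨V, hV, hVs, fun v hv => ?_⟩
    have h1 : (1 : G) ∈ V := mem_of_mem_nhds hV
    have := hVm (Set.mul_mem_mul hv h1)
    rwa [mul_one] at this
  let next : {W : Set G // W ∈ 𝓝 (1 : G) ∧ W⁻¹ = W} → {W : Set G // W ∈ 𝓝 (1 : G) ∧ W⁻¹ = W} :=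
    fun p => ⟨(step p.1 p.2.1).choose, (step p.1 p.2.1).choose_spec.1⟩
  have hnext : ∀ p, (next p).1 * (next p).1 ⊆ p.1 :=
    fun p => (step p.1 p.2.1).choose_spec.2
  let Vs : ℕ → {W : Set G // W ∈ 𝓝 (1 : G) ∧ W⁻¹ = W} := fun n =>
    Nat.rec ⟨W0, hW0mem, hW0symm⟩ (fun _ p => next p) n
  have hVs_succ : ∀ n, Vs (n + 1) = next (Vs n) := fun _ => rfl
  have hVmul : ∀ n, (Vs (n + 1)).1 * (Vs (n + 1)).1 ⊆ (Vs n).1 := by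
    intro n
    rw [hVs_succ n]
    exact hnext (Vs n)
  have hVmem : ∀ n, (Vs n).1 ∈ 𝓝 (1 : G) := fun n => (Vs n).2.1
  have hVsymm : ∀ n, ((Vs n).1)⁻¹ = (Vs n).1 := fun n => (Vs n).2.2
  have hVanti : ∀ n, (Vs (n + 1)).1 ⊆ (Vs n).1 := by
    intro n v hv
    have := hVmul n (Set.mul_mem_mul hv (mem_of_mem_nhds (hVmem (n + 1))))
    rwa [mul_one] at this
  let W : ℕ → Set (SepAux G × SepAux G) := fun n => {p : G × G | p.2 * p.1⁻¹ ∈ (Vs n).1}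
  have hWanti : Antitone W := antitone_nat_of_succ_le (fun n p hp => hVanti n hp)
  have hdir : Directed (· ≥ ·) W := hWanti.directed_ge
  have hB : (⨅ n, Filter.principal (W n)).HasBasis (fun _ : ℕ => True) W :=
    Filter.hasBasis_iInf_principal hdir
  let toAux : G → SepAux G := fun g => g
  let ofAux : SepAux G → G := fun g => g
  letI uX : UniformSpace (SepAux G) := UniformSpace.ofCore <| UniformSpace.Core.mk'
    (⨅ n, Filter.principal (W n))
    (by
      intro r hr z
      obtain ⟨n, -, hn⟩ := hB.mem_iff.mp hr
      apply hn
      show ofAux z * (ofAux z)⁻¹ ∈ (Vs n).1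
      rw [mul_inv_cancel]
      exact mem_of_mem_nhds (hVmem n))
    (by
      intro r hr
      obtain ⟨n, -, hn⟩ := hB.mem_iff.mp hr
      refine hB.mem_iff.mpr ⟨n, trivial, ?_⟩
      intro p hp
      apply hn
      show ofAux p.1 * (ofAux p.2)⁻¹ ∈ (Vs n).1
      have hp' : ofAux p.2 * (ofAux p.1)⁻¹ ∈ (Vs n).1 := hp
      rw [← hVsymm n, Set.mem_inv, mul_inv_rev, inv_inv]
      exact hp')
    (by
      intro r hr
      obtain ⟨n, -, hn⟩ := hB.mem_iff.mp hr
      refine ⟨W (n + 1), hB.mem_iff.mpr ⟨n + 1, trivial, subset_rfl⟩, ?_⟩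
      rintro ⟨a, c⟩ ⟨b, hab, hbc⟩
      apply hn
      show ofAux c * (ofAux a)⁻¹ ∈ (Vs n).1
      have hab' : ofAux b * (ofAux a)⁻¹ ∈ (Vs (n + 1)).1 := hab
      have hbc' : ofAux c * (ofAux b)⁻¹ ∈ (Vs (n + 1)).1 := hbc
      have := hVmul n (Set.mul_mem_mul hbc' hab')
      rwa [show (ofAux c * (ofAux b)⁻¹) * (ofAux b * (ofAux a)⁻¹) = ofAux c * (ofAux a)⁻¹ by group]
        at this)
  have huni : 𝓤 (SepAux G) = ⨅ n, Filter.principal (W n) := rfl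
  haveI : Filter.IsCountablyGenerated (𝓤 (SepAux G)) := by
    rw [huni]; exact hB.isCountablyGenerated
  haveI hmetr : TopologicalSpace.PseudoMetrizableSpace (SepAux G) := inferInstance
  obtain ⟨m, hm⟩ : ∃ m : PseudoMetricSpace (SepAux G),
      m.toUniformSpace.toTopologicalSpace = uX.toTopologicalSpace :=
    ⟨UniformSpace.pseudoMetricSpace _, rfl⟩
  have hj : Continuous (toAux : G → SepAux G) := by
    rw [continuous_def]
    intro s hs
    rw [isOpen_iff_ball_subset] at hs
    rw [isOpen_iff_mem_nhds]
    intro z hz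
    obtain ⟨Vent, hVent, hball⟩ := hs (toAux z) hz
    obtain ⟨n, -, hn⟩ := hB.mem_iff.mp (huni ▸ hVent)
    have hmem : (fun y : G => y * z⁻¹) ⁻¹' (Vs n).1 ∈ 𝓝 z := by
      apply (continuous_mul_right z⁻¹).continuousAt.preimage_mem_nhds
      simpa using hVmem n
    refine Filter.mem_of_superset hmem ?_
    intro y hy
    apply hball
    apply hn
    exact hy
  have hdistc := dist_cont_aux m (toAux x)
  rw [hm] at hdistc
  have hdself := dist_self_aux m (toAux x)
  refine ⟨fun b => @dist _ m.toDist (toAux x) (toAux b), hdistc.comp hj, hdself, ?_⟩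
  have hW0x : UniformSpace.ball (toAux x) (W 0) ⊆ (U : Set (SepAux G)) := by
    intro y hy
    have hy' : ofAux y * x⁻¹ ∈ W0 := hy
    have h1 := hW0sub hy'
    have h2 : (ofAux y * x⁻¹) * x ∈ U := h1
    rwa [inv_mul_cancel_right] at h2
  have hball_nhds : UniformSpace.ball (toAux x) (W 0) ∈ 𝓝 (toAux x) :=
    UniformSpace.ball_mem_nhds _ (huni ▸ hB.mem_iff.mpr ⟨0, trivial, subset_rfl⟩)
  rw [← hm] at hball_nhds
  obtain ⟨ε, hε, hsub⟩ := (@Metric.mem_nhds_iff (SepAux G) m _ _).mp hball_nhds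
  refine ⟨ε, hε, fun b hb => ?_⟩
  by_contra hlt
  push_neg at hlt
  have hmb : toAux b ∈ @Metric.ball (SepAux G) m (toAux x) ε := by
    show @dist _ m.toDist (toAux b) (toAux x) < ε
    rw [dist_comm_aux m]
    exact hlt
  exact hb (hW0x (hsub hmb))

lemma exists_continuous_injective_toPi (α : Cardinal.{u}) (hα : ℵ₀ ≤ α) (G : Type u)
    [TopologicalSpace G] [CompactSpace G] [T2Space G] (hw : tweight G ≤ α) :
    ∃ f : G → (α.out → ℝ), Continuous f ∧ Injective f := by
  classical
  have hne : {c : Cardinal.{u} | ∃ B : Set (Set G),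
      TopologicalSpace.IsTopologicalBasis B ∧ #B = c}.Nonempty :=
    ⟨_, {s : Set G | IsOpen s}, TopologicalSpace.isTopologicalBasis_opens, rfl⟩
  obtain ⟨B, hB, hBc⟩ := csInf_mem hne
  have hBle : #B ≤ α := by rw [hBc]; exact hw
  have hprod : #(↥B × ↥B) ≤ α := by
    calc #(↥B × ↥B) = #↥B * #↥B := by simp [Cardinal.mk_prod]
    _ ≤ α * α := mul_le_mul' hBle hBle
    _ = α := Cardinal.mul_eq_self hα
  obtain ⟨j⟩ : Nonempty (↥B × ↥B ↪ α.out) := by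
    rw [← Cardinal.le_def, Cardinal.mk_out]; exact hprod
  have hex : ∀ p : ↥B × ↥B, closure (p.1 : Set G) ⊆ (p.2 : Set G) →
      ∃ g : G → ℝ, Continuous g ∧ (∀ y ∈ closure (p.1 : Set G), g y = 0) ∧
        (∀ y, y ∉ (p.2 : Set G) → g y = 1) := by
    intro p hp
    have h1 : IsClosed (closure (p.1 : Set G)) := isClosed_closure
    have h2 : IsClosed ((p.2 : Set G)ᶜ) := (hB.isOpen p.2.2).isClosed_compl
    have hd : Disjoint (closure (p.1 : Set G)) ((p.2 : Set G)ᶜ) := by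
      rw [Set.disjoint_left]; intro a ha hc; exact hc (hp ha)
    obtain ⟨g, hg0, hg1, _⟩ := exists_continuous_zero_one_of_isClosed h1 h2 hd
    exact ⟨g, g.continuous, fun y hy => hg0 hy, fun y hy => hg1 hy⟩
  let gfun : ↥B × ↥B → G → ℝ := fun p =>
    if h : closure (p.1 : Set G) ⊆ (p.2 : Set G) then (hex p h).choose else fun _ => 0
  have hgc : ∀ p, Continuous (gfun p) := by
    intro p; simp only [gfun]; split_ifs with h
    · exact (hex p h).choose_spec.1
    · exact continuous_const
  refine ⟨fun x i => if h : ∃ p : ↥B × ↥B, j p = i then gfun h.choose x else 0, ?_, ?_⟩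
  · apply continuous_pi; intro i
    by_cases h : ∃ p : ↥B × ↥B, j p = i
    · simp only [dif_pos h]; exact hgc h.choose
    · simp only [dif_neg h]; exact continuous_const
  · intro x y hxy
    by_contra hne'
    obtain ⟨V, hVB, hxV, hVy⟩ := hB.exists_subset_of_mem_open
      (show x ∈ ({y}ᶜ : Set G) from hne') isOpen_compl_singleton
    obtain ⟨C, hC_nhds, hC_closed, hCV⟩ :=
      exists_mem_nhds_isClosed_subset ((hB.isOpen hVB).mem_nhds hxV)
    obtain ⟨U, hUB, hxU, hUC⟩ := hB.exists_subset_of_mem_open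
      (mem_interior_iff_mem_nhds.mpr hC_nhds) isOpen_interior
    have hcl : closure U ⊆ V := by
      refine subset_trans ?_ hCV
      calc closure U ⊆ closure (interior C) := closure_mono hUC
      _ ⊆ closure C := closure_mono interior_subset
      _ = C := hC_closed.closure_eq
    set p : ↥B × ↥B := (⟨U, hUB⟩, ⟨V, hVB⟩) with hp
    have hip : ∃ q : ↥B × ↥B, j q = j p := ⟨p, rfl⟩
    have hq : hip.choose = p := j.injective hip.choose_spec
    have hclp : closure ((p.1 : Set G)) ⊆ (p.2 : Set G) := hcl
    have h0 : (if h : ∃ q : ↥B × ↥B, j q = j p then gfun h.choose x else 0) = 0 := by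
      rw [dif_pos hip, hq]
      simp only [gfun, dif_pos hclp]
      exact (hex p hclp).choose_spec.2.1 x (subset_closure hxU)
    have h1 : (if h : ∃ q : ↥B × ↥B, j q = j p then gfun h.choose y else 0) = 1 := by
      rw [dif_pos hip, hq]
      simp only [gfun, dif_pos hclp]
      exact (hex p hclp).choose_spec.2.2 y (fun hy => hVy hy rfl)
    have hfin := congrFun hxy (j p)
    simp only [] at hfin
    rw [h0, h1] at hfin
    exact zero_ne_one hfin

lemma exists_factor (α : Cardinal.{u}) (hα : ℵ₀ ≤ α) {X : Type u} [TopologicalSpace X]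
    (hps : IsAlphaPseudocompact α X) {f : X → α.out → ℝ} {g : X → ℝ}
    (hf : Continuous f) (hinj : Injective f) (hg : Continuous g) :
    ∃ h : ↥(Set.range f) → ℝ, Continuous h ∧ ∀ x, g x = h ⟨f x, Set.mem_range_self x⟩ := by
  classical
  obtain ⟨e⟩ : Nonempty (Option α.out ≃ α.out) := by
    rw [← Cardinal.eq, Cardinal.mk_option, Cardinal.mk_out, Cardinal.add_one_eq hα]
  let F : X → α.out → ℝ := fun x i => ((e.symm i).elim (g x) (f x))
  have hF : Continuous F := by
    apply continuous_pi; intro i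
    rcases h : e.symm i with _ | j
    · simp only [F, h, Option.elim]; exact hg
    · simp only [F, h, Option.elim]; exact (continuous_apply j).comp hf
  have hK : IsCompact (Set.range F) := hps F hF
  haveI : CompactSpace ↥(Set.range F) := isCompact_iff_compactSpace.mp hK
  let q : (α.out → ℝ) → α.out → ℝ := fun y j => y (e (some j))
  have hq : Continuous q := continuous_pi fun j => continuous_apply _
  have hqF : ∀ x, q (F x) = f x := by
    intro x; funext j; simp [q, F, Equiv.symm_apply_apply]
  let Φ : ↥(Set.range F) → α.out → ℝ := fun k => q k.1
  have hΦc : Continuous Φ := hq.comp continuous_subtype_val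
  have hΦi : Injective Φ := by
    rintro ⟨k1, x1, rfl⟩ ⟨k2, x2, rfl⟩ h
    have hf12 : f x1 = f x2 := by rw [← hqF, ← hqF]; exact h
    have hx : x1 = x2 := hinj hf12
    simp [hx]
  have hrange : ∀ k : ↥(Set.range F), Φ k ∈ Set.range f := by
    rintro ⟨k, x, rfl⟩; exact ⟨x, (hqF x).symm⟩
  have hcont : Continuous (fun k => (⟨Φ k, hrange k⟩ : ↥(Set.range f))) := hΦc.subtype_mk _
  let χequiv : ↥(Set.range F) ≃ ↥(Set.range f) :=
    Equiv.ofBijective (fun k => ⟨Φ k, hrange k⟩)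
      ⟨fun a b h => hΦi (congrArg Subtype.val h),
       by rintro ⟨y, x, rfl⟩; exact ⟨⟨F x, Set.mem_range_self x⟩, Subtype.ext (hqF x)⟩⟩
  have hχc : Continuous χequiv := hcont
  let χ : ↥(Set.range F) ≃ₜ ↥(Set.range f) := hχc.homeoOfEquivCompactToT2
  refine ⟨(fun k : ↥(Set.range F) => k.1 (e none)) ∘ χ.symm, ?_, ?_⟩
  · exact ((continuous_apply _).comp continuous_subtype_val).comp χ.symm.continuous
  · intro x
    have hχx : χ ⟨F x, Set.mem_range_self x⟩ = ⟨f x, Set.mem_range_self x⟩ :=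
      Subtype.ext (hqF x)
    have h1 : χ.symm ⟨f x, Set.mem_range_self x⟩ = ⟨F x, Set.mem_range_self x⟩ := by
      rw [← hχx, Homeomorph.symm_apply_apply]
    show g x = (χ.symm ⟨f x, Set.mem_range_self x⟩).1 (e none)
    rw [h1]
    simp [F, Equiv.symm_apply_apply]

/-- a compact (not necessarily abelian) group of weight `≤ α` is both
`s_α`-extremal (no proper dense `α`-pseudocompact subgroup) and `r_α`-extremal
(no strictly finer `α`-pseudocompact group topology). -/
theorem statement_6 (α : Cardinal.{u}) (hα : ℵ₀ ≤ α) (G : Type u) [Group G]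
    [t : TopologicalSpace G] [IsTopologicalGroup G] [T2Space G] [CompactSpace G]
    (hw : tweight G ≤ α) :
    (¬ ∃ D : Subgroup G, D ≠ ⊤ ∧ Dense (D : Set G) ∧ IsAlphaPseudocompact α ↥D) ∧
    (¬ ∃ t' : TopologicalSpace G, t' < t ∧ @IsTopologicalGroup G t' _ ∧
      @IsAlphaPseudocompact α G t') := by
  classical
  obtain ⟨f, hfc, hfi⟩ := exists_continuous_injective_toPi α hα G hw
  constructor
  · rintro ⟨D, hDne, hDdense, hDps⟩
    have hcc : Continuous (f ∘ (Subtype.val : ↥D → G)) := hfc.comp continuous_subtype_val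
    have hK : IsCompact (Set.range (f ∘ (Subtype.val : ↥D → G))) := hDps _ hcc
    have hrange : Set.range (f ∘ (Subtype.val : ↥D → G)) = f '' (D : Set G) := by
      rw [Set.range_comp, Subtype.range_coe]
    have hDuniv : (D : Set G) = Set.univ := by
      ext z
      simp only [Set.mem_univ, iff_true]
      have h1 : f z ∈ closure (f '' (D : Set G)) := by
        have h2 : f z ∈ f '' (closure (D : Set G)) := by
          rw [hDdense.closure_eq]
          exact ⟨z, trivial, rfl⟩
        exact (image_closure_subset_closure_image hfc) h2
      rw [← hrange, hK.isClosed.closure_eq, hrange] at h1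
      obtain ⟨d, hd, hfd⟩ := h1
      exact (hfi hfd) ▸ hd
    exact hDne ((Subgroup.coe_eq_univ).mp hDuniv)
  · rintro ⟨t', hlt, htg', hps'⟩
    have hle : t ≤ t' := by
      rw [TopologicalSpace.le_def]
      intro s hs
      rw [@isOpen_iff_forall_mem_open G t s]
      intro x hx
      obtain ⟨g, hgc, hgx, ε, hε, hbd⟩ := @group_separation G _ t' htg' s x hs hx
      have hfc' : @Continuous G (α.out → ℝ) t' _ f := continuous_le_dom hlt.le hfc
      obtain ⟨h, hhc, hfac⟩ := @exists_factor α hα G t' hps' f g hfc' hfi hgc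
      clear hgc hfc' hps' htg' hs hlt
      clear t'
      have hgt : @Continuous G ℝ t _ g := by
        have hgh : g = h ∘ (fun z => (⟨f z, Set.mem_range_self z⟩ : ↥(Set.range f))) :=
          funext hfac
        rw [hgh]
        exact Continuous.comp hhc (Continuous.subtype_mk hfc _)
      refine ⟨g ⁻¹' Set.Iio ε, ?_, hgt.isOpen_preimage _ isOpen_Iio, ?_⟩
      · intro b hb
        by_contra hbs
        exact absurd (hbd b hbs) (not_le.mpr hb)
      · show g x ∈ Set.Iio ε
        rw [hgx]
        exact hε
    exact hlt.not_ge hle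
end

section
/- Let α be an infinite cardinal and let G be an α-pseudocompact topological group. Then P_α G, the set G endowed with the topology generated by the G_α-sets of G, is a Baire space. -/
open Cardinal Set Function Topology Pointwise

universe u

section Auxiliary

open Filter TopologicalSpace Uniformity

/-- In a topological group, every point of an open set admits a continuous real-valued
function vanishing at the point whose zero set is contained in the open set. -/
lemma sep_aux {G : Type u} [Group G] [TopologicalSpace G] [IsTopologicalGroup G]
    {U : Set G} (hU : IsOpen U) {x : G} (hx : x ∈ U) :
    ∃ f : G → ℝ, Continuous f ∧ f x = 0 ∧ {y | f y = 0} ⊆ U := by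
  classical
  set W : Set G := (fun y => x * y) ⁻¹' U with hWdef
  have hWo : IsOpen W := hU.preimage (continuous_mul_left x)
  have hW1 : (1 : G) ∈ W := by simp [hWdef, hx]
  have step : ∀ V : Set G, IsOpen V → (1 : G) ∈ V →
      ∃ V' : Set G, IsOpen V' ∧ (1 : G) ∈ V' ∧ V' = V'⁻¹ ∧ V' * V' ⊆ V := by
    intro V hVo hV1
    obtain ⟨V0, hV0o, hV01, hV0m⟩ := exists_open_nhds_one_mul_subset (hVo.mem_nhds hV1)
    refine ⟨V0 ∩ V0⁻¹, hV0o.inter hV0o.inv, ⟨hV01, by simpa using hV01⟩, ?_, ?_⟩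
    · simp [Set.inter_inv, inv_inv, Set.inter_comm]
    · exact (Set.mul_subset_mul Set.inter_subset_left Set.inter_subset_left).trans hV0m
  choose! nxt hno hn1 hns hnm using step
  set V : ℕ → Set G := fun n => Nat.rec (nxt W) (fun _ S => nxt S) n with hVdef
  have hVP : ∀ n, IsOpen (V n) ∧ (1 : G) ∈ V n ∧ V n = (V n)⁻¹ := by
    intro n
    induction n with
    | zero => exact ⟨hno W hWo hW1, hn1 W hWo hW1, hns W hWo hW1⟩
    | succ k ih => exact ⟨hno _ ih.1 ih.2.1, hn1 _ ih.1 ih.2.1, hns _ ih.1 ih.2.1⟩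
  have hVmul : ∀ n, V (n + 1) * V (n + 1) ⊆ V n := fun n => hnm _ (hVP n).1 (hVP n).2.1
  have hV0W : V 0 * V 0 ⊆ W := hnm W hWo hW1
  have hVsub : ∀ n, V (n + 1) ⊆ V n := by
    intro n v hv
    have h : v * 1 ∈ V (n + 1) * V (n + 1) := Set.mul_mem_mul hv (hVP (n + 1)).2.1
    simpa using hVmul n h
  have hV0sub : V 0 ⊆ W := by
    intro v hv
    have h : v * 1 ∈ V 0 * V 0 := Set.mul_mem_mul hv (hVP 0).2.1
    simpa using hV0W h
  set Wn : ℕ → Set (G × G) := fun n => {p | p.1⁻¹ * p.2 ∈ V n} with hWndef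
  have hWanti : Antitone Wn := by
    apply antitone_nat_of_succ_le
    intro n p hp
    exact hVsub n hp
  set F : Filter (G × G) := ⨅ n, Filter.principal (Wn n) with hFdef
  have hbasis : F.HasBasis (fun _ : ℕ => True) Wn :=
    Filter.hasBasis_iInf_principal hWanti.directed_ge
  have hmemF : ∀ n, Wn n ∈ F := fun n => Filter.mem_iInf_of_mem n (Filter.mem_principal_self _)
  have hrefl : Filter.principal SetRel.id ≤ F := by
    refine le_iInf fun n => Filter.principal_mono.mpr ?_
    rintro ⟨a, b⟩ h
    have hab : a = b := h
    subst hab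
    simpa [hWndef] using (hVP n).2.1
  have hsymm : Filter.Tendsto Prod.swap F F := by
    show Filter.map Prod.swap F ≤ F
    rw [hFdef]
    refine le_iInf fun n => Filter.le_principal_iff.mpr (Filter.mem_map.mpr
      (Filter.mem_of_superset (hmemF n) ?_))
    rintro ⟨a, b⟩ h
    have h2 : (a⁻¹ * b)⁻¹ ∈ (V n)⁻¹ := Set.inv_mem_inv.mpr h
    rw [← (hVP n).2.2] at h2
    simpa [hWndef, mul_inv_rev] using h2
  have hcomp : (F.lift' fun s => SetRel.comp s s) ≤ F := by
    refine le_iInf fun n => le_principal_iff.mpr ?_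
    refine Filter.mem_of_superset (Filter.mem_lift' (hmemF (n + 1))) ?_
    rintro ⟨a, c⟩ ⟨b, h1, h2⟩
    have h : (a⁻¹ * b) * (b⁻¹ * c) ∈ V n := hVmul n (Set.mul_mem_mul h1 h2)
    simpa [hWndef, mul_assoc] using h
  set Uu : UniformSpace G := UniformSpace.ofCore ⟨F, hrefl, hsymm, hcomp⟩ with hUudef
  haveI hcg : Filter.IsCountablyGenerated F := hbasis.isCountablyGenerated
  let M : PseudoMetricSpace G := @UniformSpace.pseudoMetricSpace G Uu hcg
  have hU_eq : @uniformity G (@PseudoMetricSpace.toUniformSpace G M) = F := rfl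
  refine ⟨fun y => @dist G M.toDist x y, ?_, @dist_self G M x, ?_⟩
  · rw [continuous_iff_continuousAt]
    intro a
    rw [ContinuousAt, Metric.tendsto_nhds]
    intro ε hε
    have hmem : {p : G × G | @dist G M.toDist p.1 p.2 < ε} ∈ F := by
      rw [← hU_eq]
      exact @Metric.dist_mem_uniformity G M ε hε
    obtain ⟨n, -, hsub⟩ := hbasis.mem_iff.mp hmem
    have hTo : IsOpen ((fun y => a⁻¹ * y) ⁻¹' V n) :=
      (hVP n).1.preimage (continuous_mul_left a⁻¹)
    have hTa : a ∈ (fun y => a⁻¹ * y) ⁻¹' V n := by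
      simpa using (hVP n).2.1
    filter_upwards [hTo.mem_nhds hTa] with y hy
    have hyW : ((a, y) : G × G) ∈ Wn n := hy
    have hd : @dist G M.toDist a y < ε := hsub hyW
    have h1 : |@dist G M.toDist y x - @dist G M.toDist a x| ≤ @dist G M.toDist y a :=
      @abs_dist_sub_le G M y a x
    rw [Real.dist_eq]
    calc |@dist G M.toDist x y - @dist G M.toDist x a|
        = |@dist G M.toDist y x - @dist G M.toDist a x| := by
          rw [@dist_comm G M x y, @dist_comm G M x a]
      _ ≤ @dist G M.toDist y a := h1
      _ = @dist G M.toDist a y := @dist_comm G M y a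
      _ < ε := hd
  · intro y hy
    have hy0 : @dist G M.toDist x y = 0 := hy
    have hmem : Wn 0 ∈ @uniformity G (@PseudoMetricSpace.toUniformSpace G M) := by
      rw [hU_eq]; exact hmemF 0
    obtain ⟨ε, hε, hball⟩ := (@Metric.mem_uniformity_dist G M _).mp hmem
    have hxy : ((x, y) : G × G) ∈ Wn 0 := hball (by rw [hy0]; exact hε)
    have h : x⁻¹ * y ∈ W := hV0sub hxy
    simpa [hWdef] using h

lemma dense_inter {X : Type u} [tX : TopologicalSpace X] {s : Set X} (h : Dense s)
    (U : Set X) (hU : IsOpen U) (hne : U.Nonempty) : (U ∩ s).Nonempty :=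
  dense_iff_inter_open.mp h U hU hne

lemma dense_of_inter {X : Type u} [tX : TopologicalSpace X] {s : Set X}
    (h : ∀ U, IsOpen U → U.Nonempty → (U ∩ s).Nonempty) : Dense s :=
  dense_iff_inter_open.mpr h

/-- Zero sets of continuous maps into `ℝ^α` are `G_α`-sets. -/
lemma zeroSet_isGAlphaSet {α : Cardinal.{u}} (hα : ℵ₀ ≤ α) {X : Type u} [TopologicalSpace X]
    {f : X → α.out → ℝ} (hf : Continuous f) : IsGAlphaSet α (f ⁻¹' {0}) := by
  classical
  refine ⟨Set.range (fun p : α.out × ℕ => {x : X | |f x p.1| < 1 / (p.2 + 1)}), ?_, ?_, ?_⟩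
  · rintro _ ⟨⟨i, k⟩, rfl⟩
    exact isOpen_lt (continuous_abs.comp ((continuous_apply i).comp hf)) continuous_const
  · refine Cardinal.mk_range_le.trans ?_
    have h1 : #(α.out × ℕ) = α * ℵ₀ := by
      simp [Cardinal.mk_prod, Cardinal.mk_out]
    rw [h1, Cardinal.mul_aleph0_eq hα]
  · rw [Set.sInter_range]
    ext y
    simp only [Set.mem_preimage, Set.mem_singleton_iff, Set.mem_iInter, Set.mem_setOf_eq]
    constructor
    · intro h p
      rw [h]
      simp only [Pi.zero_apply, abs_zero]
      positivity
    · intro h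
      funext i
      by_contra hne
      obtain ⟨k, hk⟩ := exists_nat_one_div_lt (abs_pos.mpr hne)
      exact absurd (h (i, k)) (not_lt.mpr hk.le)

/-- Every point of a nonempty `G_α`-set in a topological group lies in the zero set of a
continuous map to `ℝ^α` contained in the `G_α`-set. -/
lemma galpha_zero {α : Cardinal.{u}} {G : Type u} [Group G] [TopologicalSpace G]
    [IsTopologicalGroup G] {S : Set G} (hS : IsGAlphaSet α S) {x : G} (hx : x ∈ S) :
    ∃ f : G → α.out → ℝ, Continuous f ∧ f x = 0 ∧ f ⁻¹' {0} ⊆ S := by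
  classical
  obtain ⟨𝒰, hopen, hcard, rfl⟩ := hS
  have hcard' : #𝒰 ≤ #α.out := by rwa [Cardinal.mk_out]
  obtain ⟨ι⟩ := Cardinal.le_def _ _ |>.mp hcard'
  have hxU : ∀ U : 𝒰, x ∈ (U : Set G) := fun U => hx U.1 U.2
  choose g hg1 hg2 hg3 using fun U : 𝒰 => sep_aux (hopen U.1 U.2) (hxU U)
  refine ⟨fun y i => if h : ∃ U : 𝒰, ι U = i then g h.choose y else 0, ?_, ?_, ?_⟩
  · refine continuous_pi fun i => ?_
    by_cases h : ∃ U : 𝒰, ι U = i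
    · simp only [dif_pos h]
      exact hg1 h.choose
    · simp only [dif_neg h]
      exact continuous_const
  · funext i
    by_cases h : ∃ U : 𝒰, ι U = i
    · simp only [dif_pos h, Pi.zero_apply]
      exact hg2 h.choose
    · simp only [dif_neg h, Pi.zero_apply]
  · intro y hy U hU
    have hy0 : ∀ i, (if h : ∃ V : 𝒰, ι V = i then g h.choose y else 0) = 0 := by
      intro i
      have := Set.mem_singleton_iff.mp hy
      exact congrFun this i
    have hex : ∃ V : 𝒰, ι V = ι ⟨U, hU⟩ := ⟨⟨U, hU⟩, rfl⟩
    have h0 : g hex.choose y = 0 := by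
      have := hy0 (ι ⟨U, hU⟩)
      rwa [dif_pos hex] at this
    have hchoose : hex.choose = ⟨U, hU⟩ := ι.injective hex.choose_spec
    have := hg3 hex.choose h0
    rwa [hchoose] at this

/-- `G_α`-sets are closed under finite intersection. -/
lemma IsGAlphaSet.inter' {α : Cardinal.{u}} (hα : ℵ₀ ≤ α) {X : Type u} [TopologicalSpace X]
    {S T : Set X} (h1 : IsGAlphaSet α S) (h2 : IsGAlphaSet α T) :
    IsGAlphaSet α (S ∩ T) := by
  obtain ⟨𝒰, hU, hcU, rfl⟩ := h1
  obtain ⟨𝒱, hV, hcV, rfl⟩ := h2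
  refine ⟨𝒰 ∪ 𝒱, fun W hW => hW.elim (hU W) (hV W), ?_, (Set.sInter_union _ _).symm⟩
  exact (Cardinal.mk_union_le _ _).trans
    ((add_le_add hcU hcV).trans (le_of_eq (Cardinal.add_eq_self hα)))

/-- `univ` is a `G_α`-set. -/
lemma isGAlphaSet_univ {α : Cardinal.{u}} {X : Type u} [TopologicalSpace X] :
    IsGAlphaSet α (Set.univ : Set X) :=
  ⟨∅, by simp, by simp, by simp⟩

/-- `G_α`-sets are open in the `P_α`-topology. -/
lemma IsGAlphaSet.palphaOpen {α : Cardinal.{u}} {X : Type u} [tX : TopologicalSpace X]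
    {S : Set X} (h : IsGAlphaSet α S) : IsOpen[PAlphaTop α X tX] S :=
  TopologicalSpace.isOpen_generateFrom_of_mem h

/-- The `G_α`-sets form a basis of the `P_α`-topology. -/
lemma palpha_basis {α : Cardinal.{u}} (hα : ℵ₀ ≤ α) {X : Type u} [tX : TopologicalSpace X]
    {U : Set X} (hU : TopologicalSpace.GenerateOpen {S : Set X | IsGAlphaSet α S} U) :
    ∀ x ∈ U, ∃ S : Set X, IsGAlphaSet α S ∧ x ∈ S ∧ S ⊆ U := by
  induction hU with
  | basic S hS => exact fun x hx => ⟨S, hS, hx, subset_rfl⟩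
  | univ => exact fun x _ => ⟨Set.univ, isGAlphaSet_univ, trivial, subset_rfl⟩
  | inter S T _ _ ihS ihT =>
    intro x hx
    obtain ⟨S1, h1, hx1, hsub1⟩ := ihS x hx.1
    obtain ⟨S2, h2, hx2, hsub2⟩ := ihT x hx.2
    exact ⟨S1 ∩ S2, h1.inter' hα h2, ⟨hx1, hx2⟩,
      Set.inter_subset_inter hsub1 hsub2⟩
  | sUnion 𝒮 _ ih =>
    intro x hx
    obtain ⟨T, hT𝒮, hxT⟩ := hx
    obtain ⟨S, hS, hxS, hsub⟩ := ih T hT𝒮 x hxT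
    exact ⟨S, hS, hxS, hsub.trans (Set.subset_sUnion_of_mem hT𝒮)⟩

/-- The key step: a nonempty zero set can be refined inside a dense `P_α`-open set. -/
lemma exists_zero_subset {α : Cardinal.{u}} (hα : ℵ₀ ≤ α) {G : Type u} [Group G]
    [t : TopologicalSpace G] [IsTopologicalGroup G] {D : Set G}
    (hDo : IsOpen[PAlphaTop α G t] D) (hDd : @Dense G (PAlphaTop α G t) D)
    {f : G → α.out → ℝ} (hf : Continuous f) (hne : (f ⁻¹' {0}).Nonempty) :
    ∃ g : G → α.out → ℝ, Continuous g ∧ (g ⁻¹' {0}).Nonempty ∧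
      g ⁻¹' {0} ⊆ f ⁻¹' {0} ∩ D := by
  have hZo : IsOpen[PAlphaTop α G t] (f ⁻¹' {0}) := (zeroSet_isGAlphaSet hα hf).palphaOpen
  obtain ⟨w, hwZ, hwD⟩ := @dense_inter G (PAlphaTop α G t) D hDd (f ⁻¹' {0}) hZo hne
  have hopen' : IsOpen[PAlphaTop α G t] (f ⁻¹' {0} ∩ D) := @IsOpen.inter G (PAlphaTop α G t) _ _ hZo hDo
  obtain ⟨S, hS, hwS, hSsub⟩ := palpha_basis hα hopen' w ⟨hwZ, hwD⟩
  obtain ⟨g, hg, hgw, hgsub⟩ := galpha_zero hS hwS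
  exact ⟨g, hg, ⟨w, by simp [hgw]⟩, hgsub.trans hSsub⟩

end Auxiliary

/-- for an `α`-pseudocompact group `G`, the space `P_α G` (the set `G` with
the topology generated by the `G_α`-sets) is Baire. -/
theorem statement_10 (α : Cardinal.{u}) (hα : ℵ₀ ≤ α) (G : Type u) [Group G]
    [t : TopologicalSpace G] [IsTopologicalGroup G] [T2Space G]
    (hG : IsAlphaPseudocompact α G) :
    @BaireSpace G (PAlphaTop α G t) := by
  classical
  refine @BaireSpace.mk G (PAlphaTop α G t) ?_
  intro D hDo hDd
  refine @dense_of_inter G (PAlphaTop α G t) _ ?_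
  intro U hUo hUne
  obtain ⟨x₀, hx₀⟩ := hUne
  obtain ⟨S, hS, hxS, hSU⟩ := palpha_basis hα hUo x₀ hx₀
  -- initial zero set inside S
  obtain ⟨f0, hf0c, hf0x, hf0sub⟩ := galpha_zero hS hxS
  -- the recursive refinement step
  choose! nxt hc hne' hsub using fun (f : G → α.out → ℝ) (n : ℕ) (h1 : Continuous f)
    (h2 : (f ⁻¹' {0}).Nonempty) => exists_zero_subset hα (hDo n) (hDd n) h1 h2
  set seq : ℕ → (G → α.out → ℝ) := fun n => Nat.rec f0 (fun k g => nxt g k) n with hseq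
  have hinv : ∀ n, Continuous (seq n) ∧ ((seq n) ⁻¹' {0}).Nonempty := by
    intro n
    induction n with
    | zero =>
      have hseq0 : seq 0 = f0 := rfl
      exact ⟨by rw [hseq0]; exact hf0c, ⟨x₀, by simp [hseq0, hf0x]⟩⟩
    | succ k ih => exact ⟨hc _ k ih.1 ih.2, hne' _ k ih.1 ih.2⟩
  have hstep : ∀ n, (seq (n + 1)) ⁻¹' {0} ⊆ (seq n) ⁻¹' {0} ∩ D n := fun n =>
    hsub _ n (hinv n).1 (hinv n).2
  set Z : ℕ → Set G := fun n => (seq n) ⁻¹' {0} with hZ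
  have hZanti : Antitone Z :=
    antitone_nat_of_succ_le fun n => (hstep n).trans Set.inter_subset_left
  -- combine all maps into one map to ℝ^α
  have hcard : #(ℕ × α.out) = #α.out := by
    rw [Cardinal.mk_prod]
    simp only [Cardinal.mk_out, Cardinal.lift_id', Cardinal.lift_id, Cardinal.mk_eq_aleph0,
      Cardinal.lift_aleph0]
    simpa using Cardinal.aleph0_mul_eq hα
  obtain ⟨e⟩ := Cardinal.eq.mp hcard
  set F : G → α.out → ℝ := fun y i => seq (e.symm i).1 y (e.symm i).2 with hF
  have hFc : Continuous F := continuous_pi fun i =>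
    (continuous_apply (e.symm i).2).comp (hinv (e.symm i).1).1
  have hK : IsCompact (Set.range F) := hG F hFc
  set C : ℕ → Set (α.out → ℝ) := fun n => ⋂ j : α.out, {y | y (e (n, j)) = 0} with hC
  have hCclosed : ∀ n, IsClosed (C n) := fun n =>
    isClosed_iInter fun j => isClosed_eq (continuous_apply _) continuous_const
  have hFC : ∀ n y, F y ∈ C n ↔ y ∈ Z n := by
    intro n y
    simp only [hC, Set.mem_iInter, Set.mem_setOf_eq, hZ, Set.mem_preimage,
      Set.mem_singleton_iff]
    constructor
    · intro h
      funext j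
      have := h j
      simpa [hF] using this
    · intro h j
      simp [hF, h]
  set K : ℕ → Set (α.out → ℝ) := fun n => Set.range F ∩ ⋂ k ∈ Finset.range (n + 1), C k
    with hKdef
  have hKne : ∀ n, (K n).Nonempty := by
    intro n
    obtain ⟨z, hz⟩ := (hinv n).2
    refine ⟨F z, ⟨z, rfl⟩, ?_⟩
    simp only [Set.mem_iInter]
    intro k hk
    have hkn : k ≤ n := Nat.lt_succ_iff.mp (Finset.mem_range.mp hk)
    exact (hFC k z).mpr (hZanti hkn hz)
  have hKmono : ∀ n, K (n + 1) ⊆ K n := by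
    intro n
    refine Set.inter_subset_inter subset_rfl ?_
    refine Set.iInter₂_mono' fun k hk => ⟨k, ?_, subset_rfl⟩
    exact Finset.mem_range.mpr (Nat.lt_succ_of_lt (Finset.mem_range.mp hk))
  have hKclosed : ∀ n, IsClosed (K n) :=
    fun n => hK.isClosed.inter (isClosed_biInter fun k _ => hCclosed k)
  have hK0 : IsCompact (K 0) :=
    hK.inter_right (isClosed_biInter fun k _ => hCclosed k)
  obtain ⟨y, hy⟩ := IsCompact.nonempty_iInter_of_sequence_nonempty_isCompact_isClosed
    K hKmono hKne hK0 hKclosed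
  have hy0 := Set.mem_iInter.mp hy 0
  obtain ⟨z, rfl⟩ := hy0.1
  have hzZ : ∀ n, z ∈ Z n := by
    intro n
    refine (hFC n z).mp ?_
    have hn := (Set.mem_iInter.mp hy n).2
    exact Set.mem_iInter.mp (Set.mem_iInter.mp hn n) (Finset.self_mem_range_succ n)
  refine ⟨z, hSU (hf0sub (hzZ 0)), ?_⟩
  rw [Set.mem_iInter]
  intro n
  exact ((hstep n) (hzZ (n + 1))).2
end

section
/- Let α be an infinite cardinal, let G be an α-pseudocompact abelian topological group and suppose G = ⋃_{n∈ℕ} A_n where each A_n is a subgroup of G. Then there exist n ∈ ℕ and N ∈ Λ_α(G) such that A_n ∩ N is G_α-dense in N. -/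
open Cardinal Set Function Topology Pointwise

universe u

section StatementTwelveAux

open Filter Uniformity

variable {α : Cardinal.{u}} {G : Type u}

private lemma aux_shrink [AddCommGroup G] [TopologicalSpace G] [IsTopologicalAddGroup G]
    {S : Set G} (hS : S ∈ 𝓝 (0 : G)) :
    ∃ W : Set G, IsOpen W ∧ (0 : G) ∈ W ∧ (∀ x ∈ W, -x ∈ W) ∧
      ∀ x ∈ W, ∀ y ∈ W, x + y ∈ S := by
  obtain ⟨V, hV, hVS⟩ := exists_nhds_zero_half hS
  refine ⟨interior V ∩ -interior V, isOpen_interior.inter isOpen_interior.neg,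
    ⟨mem_interior_iff_mem_nhds.2 hV, ?_⟩, ?_, ?_⟩
  · rw [Set.mem_neg, neg_zero]; exact mem_interior_iff_mem_nhds.2 hV
  · rintro x ⟨h1, h2⟩
    exact ⟨by rwa [Set.mem_neg] at h2, by rwa [Set.mem_neg, neg_neg]⟩
  · intro x hx y hy
    exact hVS x (interior_subset hx.1) y (interior_subset hy.1)

private lemma aux_chain [AddCommGroup G] [TopologicalSpace G] [IsTopologicalAddGroup G]
    {U : Set G} (hU : U ∈ 𝓝 (0 : G)) :
    ∃ W : ℕ → Set G, (∀ k, IsOpen (W k)) ∧ (∀ k, (0 : G) ∈ W k) ∧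
      (∀ k, ∀ x ∈ W k, -x ∈ W k) ∧
      (∀ k, ∀ x ∈ W (k + 1), ∀ y ∈ W (k + 1), x + y ∈ W k) ∧ W 0 ⊆ U := by
  let P := {S : Set G // IsOpen S ∧ (0 : G) ∈ S ∧ ∀ x ∈ S, -x ∈ S}
  have step : ∀ T : Set G, T ∈ 𝓝 (0 : G) →
      ∃ p : P, ∀ x ∈ p.1, ∀ y ∈ p.1, x + y ∈ T := by
    intro T hT
    obtain ⟨W, h1, h2, h3, h4⟩ := aux_shrink hT
    exact ⟨⟨W, h1, h2, h3⟩, h4⟩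
  have stepnhds : ∀ p : P, p.1 ∈ 𝓝 (0 : G) := fun p => p.2.1.mem_nhds p.2.2.1
  let f : P → P := fun p => (step p.1 (stepnhds p)).choose
  have hf : ∀ p : P, ∀ x ∈ (f p).1, ∀ y ∈ (f p).1, x + y ∈ p.1 :=
    fun p => (step p.1 (stepnhds p)).choose_spec
  let p0 : P := (step U hU).choose
  have hp0 : ∀ x ∈ p0.1, ∀ y ∈ p0.1, x + y ∈ U := (step U hU).choose_spec
  let seq : ℕ → P := fun k => f^[k] p0
  have hseq : ∀ k, seq (k + 1) = f (seq k) := fun k => Function.iterate_succ_apply' f k p0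
  refine ⟨fun k => (seq k).1, fun k => (seq k).2.1, fun k => (seq k).2.2.1,
    fun k => (seq k).2.2.2, ?_, ?_⟩
  · intro k x hx y hy
    have hx' : x ∈ (seq (k + 1)).1 := hx
    have hy' : y ∈ (seq (k + 1)).1 := hy
    rw [hseq k] at hx' hy'
    exact hf (seq k) x hx' y hy'
  · intro x hx
    have hx0 : x ∈ p0.1 := hx
    have := hp0 x hx0 0 p0.2.2.1
    simpa using this

private lemma aux_fn [AddCommGroup G] [TopologicalSpace G] [IsTopologicalAddGroup G]
    {U : Set G} (hU : U ∈ 𝓝 (0 : G)) :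
    ∃ (f : G → ℝ) (W : ℕ → Set G), Continuous f ∧ (∀ k, IsOpen (W k)) ∧
      {x | f x = 0} = (⋂ k, W k) ∧ (⋂ k, W k) ⊆ U ∧ (0 : G) ∈ (⋂ k, W k) ∧
      (∀ x ∈ (⋂ k, W k), -x ∈ (⋂ k, W k)) ∧
      (∀ x ∈ (⋂ k, W k), ∀ y ∈ (⋂ k, W k), x + y ∈ (⋂ k, W k)) := by
  obtain ⟨W, hopen, hzero, hneg, hadd, hWU⟩ := aux_chain hU
  have hmono : ∀ k, W (k + 1) ⊆ W k := by
    intro k x hx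
    have := hadd k x hx 0 (hzero (k + 1))
    rwa [add_zero] at this
  have hanti : Antitone W := antitone_nat_of_succ_le fun k => hmono k
  set V : ℕ → Set (G × G) := fun k => {p : G × G | p.2 - p.1 ∈ W k} with hVdef
  have hVanti : Antitone V := fun i j hij p hp => hanti hij hp
  set F : Filter (G × G) := ⨅ k, 𝓟 (V k) with hF
  have hB : F.HasBasis (fun _ => True) V := Filter.hasBasis_iInf_principal hVanti.directed_ge
  have hVF : ∀ k, V k ∈ F := fun k => Filter.mem_iInf_of_mem k (Filter.mem_principal_self _)
  have refl : ∀ r ∈ F, ∀ x : G, (x, x) ∈ r := by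
    intro r hr x
    obtain ⟨k, -, hk⟩ := hB.mem_iff.1 hr
    exact hk (show x - x ∈ W k by rw [sub_self]; exact hzero k)
  have symm : ∀ r ∈ F, Prod.swap ⁻¹' r ∈ F := by
    intro r hr
    obtain ⟨k, -, hk⟩ := hB.mem_iff.1 hr
    refine Filter.mem_of_superset (hVF k) ?_
    intro p hp
    refine hk ?_
    show p.1 - p.2 ∈ W k
    have := hneg k _ hp
    rwa [neg_sub] at this
  have comp : ∀ r ∈ F, ∃ t ∈ F, SetRel.comp t t ⊆ r := by
    intro r hr
    obtain ⟨k, -, hk⟩ := hB.mem_iff.1 hr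
    refine ⟨V (k + 1), hVF _, ?_⟩
    rintro ⟨x, z⟩ ⟨y, hxy, hyz⟩
    refine hk ?_
    show z - x ∈ W k
    have := hadd k _ hyz _ hxy
    rwa [sub_add_sub_cancel] at this
  let u' : UniformSpace G := UniformSpace.ofCore (UniformSpace.Core.mk' F refl symm comp)
  have hu : 𝓤[u'] = F := rfl
  haveI hcg : (𝓤[u']).IsCountablyGenerated := by
    rw [hu]; exact hB.isCountablyGenerated
  obtain ⟨pm, hpm⟩ := @UniformSpace.metrizable_uniformity G u' hcg
  set d : G → ℝ := fun x => @dist G pm.toDist x 0 with hd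
  have hUF : @uniformity G pm.toUniformSpace = F := by rw [hpm]; exact rfl
  have hzeroset : ∀ x : G, d x = 0 ↔ x ∈ ⋂ k, W k := by
    intro x
    constructor
    · intro hx
      refine Set.mem_iInter.2 fun k => ?_
      have hm : V k ∈ @uniformity G pm.toUniformSpace := by rw [hUF]; exact hVF k
      obtain ⟨ε, hε, hball⟩ := (@Metric.mem_uniformity_dist G pm _).1 hm
      have hp : (x, (0 : G)) ∈ V k := by
        refine hball ?_
        show @dist G pm.toDist x 0 < ε
        have hx' : @dist G pm.toDist x 0 = 0 := hx
        rw [hx']; exact hε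
      have h0 : (0 : G) - x ∈ W k := hp
      rw [zero_sub] at h0
      have := hneg k _ h0
      rwa [neg_neg] at this
    · intro hx
      by_contra hne
      have hpos : 0 < d x := lt_of_le_of_ne (@dist_nonneg G pm x 0) (Ne.symm hne)
      have hm : {p : G × G | @dist G pm.toDist p.1 p.2 < d x} ∈ F := by
        rw [← hUF]; exact @Metric.dist_mem_uniformity G pm _ hpos
      obtain ⟨k, -, hk⟩ := hB.mem_iff.1 hm
      have hp : (x, (0 : G)) ∈ V k := by
        show (0 : G) - x ∈ W k
        rw [zero_sub]
        exact hneg k _ (Set.mem_iInter.1 hx k)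
      have hlt : @dist G pm.toDist x 0 < d x := hk hp
      exact lt_irrefl (d x) hlt
  have hle : @Continuous G G _ pm.toUniformSpace.toTopologicalSpace id := by
    refine (@continuous_def G G _ pm.toUniformSpace.toTopologicalSpace id).2 ?_
    intro s hs
    have hs' : @IsOpen G u'.toTopologicalSpace s := by rw [← hpm]; exact hs
    have hball := (@isOpen_iff_ball_subset G u' s).1 hs'
    rw [Set.preimage_id]
    rw [isOpen_iff_mem_nhds]
    intro x hx
    obtain ⟨Vent, hVent, hVs⟩ := hball x hx
    obtain ⟨k, -, hk⟩ := hB.mem_iff.1 hVent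
    have hsub : (fun y => y - x) ⁻¹' W k ⊆ s := by
      intro y hy
      exact hVs (hk (show y - x ∈ W k from hy))
    have hopen' : IsOpen ((fun y => y - x) ⁻¹' W k) :=
      (hopen k).preimage (continuous_id.sub continuous_const)
    have hxmem : x ∈ (fun y => y - x) ⁻¹' W k := by
      show x - x ∈ W k
      rw [sub_self]; exact hzero k
    exact Filter.mem_of_superset (hopen'.mem_nhds hxmem) hsub
  have hcont : Continuous d := by
    have h1 : @Continuous G ℝ pm.toUniformSpace.toTopologicalSpace _ d :=
      @Continuous.dist G G pm pm.toUniformSpace.toTopologicalSpace id (fun _ => 0)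
        (@continuous_id G pm.toUniformSpace.toTopologicalSpace)
        (@continuous_const G G pm.toUniformSpace.toTopologicalSpace
          pm.toUniformSpace.toTopologicalSpace 0)
    exact @Continuous.comp G G ℝ inferInstance pm.toUniformSpace.toTopologicalSpace
      inferInstance id d h1 hle
  refine ⟨d, W, hcont, hopen, ?_, ?_, ?_, ?_, ?_⟩
  · ext x; exact hzeroset x
  · intro x hx
    exact hWU (Set.mem_iInter.1 hx 0)
  · exact Set.mem_iInter.2 fun k => hzero k
  · intro x hx
    exact Set.mem_iInter.2 fun k => hneg k x (Set.mem_iInter.1 hx k)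
  · intro x hx y hy
    exact Set.mem_iInter.2 fun k =>
      hadd k x (Set.mem_iInter.1 hx (k + 1)) y (Set.mem_iInter.1 hy (k + 1))

private lemma claimA [AddCommGroup G] [TopologicalSpace G] [IsTopologicalAddGroup G]
    (hα : ℵ₀ ≤ α) {S : Set G} (hS : IsGAlphaSet α S) (h0 : (0 : G) ∈ S) :
    ∃ (N : AddSubgroup G) (f : α.out → G → ℝ),
      N ∈ LambdaAlphaAdd α G ∧ (∀ j, Continuous (f j)) ∧
      (N : Set G) ⊆ (⋂ j, f j ⁻¹' {0}) ∧ (⋂ j, f j ⁻¹' {0}) ⊆ S := by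
  obtain ⟨𝒰, hop, hcard, hSeq⟩ := hS
  have h0' : ∀ U ∈ 𝒰, (0 : G) ∈ U := by
    intro U hU
    rw [hSeq] at h0
    exact h0 U hU
  have hmem : ∀ U : ↑𝒰, U.1 ∈ 𝓝 (0 : G) := fun U => (hop U.1 U.2).mem_nhds (h0' U.1 U.2)
  choose f W hf hWopen hzeroeq hsubU hmemH hnegH haddH using fun U : ↑𝒰 => aux_fn (hmem U)
  let N : AddSubgroup G :=
    { carrier := ⋂ U : ↑𝒰, ⋂ k, W U k
      zero_mem' := Set.mem_iInter.2 fun U => hmemH U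
      add_mem' := fun {a b} ha hb => Set.mem_iInter.2 fun U =>
        haddH U a (Set.mem_iInter.1 ha U) b (Set.mem_iInter.1 hb U)
      neg_mem' := fun {a} ha => Set.mem_iInter.2 fun U => hnegH U a (Set.mem_iInter.1 ha U) }
  have hNcar : (N : Set G) = ⋂ U : ↑𝒰, ⋂ k, W U k := rfl
  have hNzero : (N : Set G) = ⋂ U : ↑𝒰, f U ⁻¹' {0} := by
    rw [hNcar]
    refine Set.iInter_congr fun U => ?_
    rw [← hzeroeq U]
    ext x
    simp only [Set.mem_setOf_eq, Set.mem_preimage, Set.mem_singleton_iff]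
  have hclosed : IsClosed (N : Set G) := by
    rw [hNzero]
    exact isClosed_iInter fun U => isClosed_singleton.preimage (hf U)
  have hGa : IsGAlphaSet α (N : Set G) := by
    refine ⟨Set.range fun p : ↑𝒰 × ℕ => W p.1 p.2, ?_, ?_, ?_⟩
    · rintro V ⟨p, rfl⟩; exact hWopen p.1 p.2
    · refine le_trans Cardinal.mk_range_le ?_
      have hpn : #(↑𝒰 × ℕ) = #↑𝒰 * ℵ₀ := by
        rw [Cardinal.mk_prod, Cardinal.lift_uzero, Cardinal.mk_nat, Cardinal.lift_aleph0]
      rw [hpn]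
      calc #↑𝒰 * ℵ₀ ≤ α * α := mul_le_mul' hcard hα
        _ = α := Cardinal.mul_eq_self hα
    · rw [Set.sInter_range, hNcar]
      ext x
      constructor
      · intro h
        exact Set.mem_iInter.2 fun p => Set.mem_iInter.1 (Set.mem_iInter.1 h p.1) p.2
      · intro h
        exact Set.mem_iInter.2 fun U => Set.mem_iInter.2 fun k => Set.mem_iInter.1 h (U, k)
  have hcard' : #↑𝒰 ≤ #α.out := by rw [Cardinal.mk_out]; exact hcard
  obtain ⟨e⟩ := (Cardinal.le_def ↑𝒰 α.out).1 hcard'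
  let g : α.out → G → ℝ := Function.extend e f fun _ _ => 0
  have hgpos : ∀ U : ↑𝒰, g (e U) = f U := fun U => e.injective.extend_apply f _ U
  have hgneg : ∀ j, ¬(∃ U : ↑𝒰, e U = j) → g j = fun _ => 0 := fun j hj =>
    Function.extend_apply' f _ j hj
  have hgc : ∀ j, Continuous (g j) := by
    intro j
    by_cases h : ∃ U : ↑𝒰, e U = j
    · obtain ⟨U, rfl⟩ := h
      rw [hgpos U]; exact hf U
    · rw [hgneg j h]; exact continuous_const
  refine ⟨N, g, ⟨hclosed, hGa⟩, hgc, ?_, ?_⟩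
  · intro x hx
    refine Set.mem_iInter.2 fun j => ?_
    by_cases h : ∃ U : ↑𝒰, e U = j
    · obtain ⟨U, rfl⟩ := h
      rw [Set.mem_preimage, Set.mem_singleton_iff, hgpos U]
      have hxU : x ∈ ⋂ k, W U k := Set.mem_iInter.1 hx U
      rw [← hzeroeq U] at hxU
      exact hxU
    · rw [Set.mem_preimage, Set.mem_singleton_iff, hgneg j h]
  · intro x hx
    rw [hSeq]
    intro U hU
    have hj := Set.mem_iInter.1 hx (e ⟨U, hU⟩)
    rw [Set.mem_preimage, Set.mem_singleton_iff, hgpos ⟨U, hU⟩] at hj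
    have hxU : x ∈ ⋂ k, W ⟨U, hU⟩ k := by rw [← hzeroeq ⟨U, hU⟩]; exact hj
    exact hsubU ⟨U, hU⟩ hxU

private lemma GAlpha_inter {X : Type u} [TopologicalSpace X] (hα : ℵ₀ ≤ α)
    {S T : Set X} (hS : IsGAlphaSet α S) (hT : IsGAlphaSet α T) :
    IsGAlphaSet α (S ∩ T) := by
  obtain ⟨𝒰, h1, h2, rfl⟩ := hS
  obtain ⟨𝒱, g1, g2, rfl⟩ := hT
  refine ⟨𝒰 ∪ 𝒱, fun U hU => hU.elim (h1 U) (g1 U), ?_, (Set.sInter_union 𝒰 𝒱).symm⟩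
  refine le_trans (Cardinal.mk_union_le 𝒰 𝒱) ?_
  calc #↑𝒰 + #↑𝒱 ≤ α + α := add_le_add h2 g2
    _ = α := Cardinal.add_eq_self hα

private lemma GAlpha_translate [AddCommGroup G] [TopologicalSpace G] [IsTopologicalAddGroup G]
    (t : G) {T : Set G} (hT : IsGAlphaSet α T) :
    IsGAlphaSet α ((fun x => t + x) ⁻¹' T) := by
  obtain ⟨𝒰, h1, h2, rfl⟩ := hT
  refine ⟨(fun u => (fun x => t + x) ⁻¹' u) '' 𝒰, ?_, ?_, ?_⟩
  · rintro U ⟨u, hu, rfl⟩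
    exact (h1 u hu).preimage (continuous_const.add continuous_id)
  · exact le_trans Cardinal.mk_image_le h2
  · rw [Set.sInter_image, Set.preimage_sInter]

private lemma notDense_pull [AddCommGroup G] [TopologicalSpace G]
    {N : AddSubgroup G} {D : Set G}
    (h : ¬IsGAlphaDense α {x : ↥N | (x : G) ∈ D}) :
    ∃ T : Set G, IsGAlphaSet α T ∧ ∃ t ∈ T, t ∈ N ∧
      ∀ g ∈ D, g ∈ T → g ∉ N := by
  unfold IsGAlphaDense at h
  push_neg at h
  obtain ⟨S, hS, hSne, hempty⟩ := h
  obtain ⟨𝒰, hop, hcard, rfl⟩ := hS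
  choose O hOopen hOeq using fun V : ↑𝒰 => isOpen_induced_iff.1 (hop V.1 V.2)
  refine ⟨⋂ V : ↑𝒰, O V, ?_, ?_⟩
  · refine ⟨Set.range O, ?_, le_trans Cardinal.mk_range_le hcard, (Set.sInter_range O).symm⟩
    rintro U ⟨V, rfl⟩
    exact hOopen V
  · obtain ⟨s, hs⟩ := hSne
    have hsmem : ∀ V : ↑𝒰, (s : G) ∈ O V := by
      intro V
      have : s ∈ V.1 := hs V.1 V.2
      rw [← hOeq V] at this
      exact this
    refine ⟨(s : G), Set.mem_iInter.2 hsmem, s.2, ?_⟩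
    intro g hgD hgT hgN
    have hgS : (⟨g, hgN⟩ : ↥N) ∈ ⋂₀ 𝒰 := by
      intro V hV
      have hmem' : (⟨g, hgN⟩ : ↥N) ∈ (Subtype.val ⁻¹' O ⟨V, hV⟩ : Set ↥N) :=
        Set.mem_iInter.1 hgT ⟨V, hV⟩
      rwa [hOeq ⟨V, hV⟩] at hmem'
    have : (⟨g, hgN⟩ : ↥N) ∈ {x : ↥N | (x : G) ∈ D} ∩ ⋂₀ 𝒰 := ⟨hgD, hgS⟩
    rw [hempty] at this
    exact this

private lemma lemmaC {X : Type u} [TopologicalSpace X]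
    (hG : IsAlphaPseudocompact α X) (g : α.out → X → ℝ) (hg : ∀ j, Continuous (g j))
    (hfip : ∀ u : Finset α.out, ∃ x : X, ∀ j ∈ u, g j x = 0) :
    ∃ x : X, ∀ j, g j x = 0 := by
  let g' : α.out → X → ℝ := fun j x => min |g j x| 1
  have hg'c : ∀ j, Continuous (g' j) := fun j => (hg j).abs.min continuous_const
  have hg'0 : ∀ j x, g' j x = 0 ↔ g j x = 0 := by
    intro j x
    constructor
    · intro h
      rcases le_total |g j x| 1 with hle | hle
      · rw [show g' j x = min |g j x| 1 from rfl, min_eq_left hle] at h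
        exact abs_eq_zero.1 h
      · rw [show g' j x = min |g j x| 1 from rfl, min_eq_right hle] at h
        norm_num at h
    · intro h
      show min |g j x| 1 = 0
      rw [h, abs_zero]
      exact min_eq_left zero_le_one
  let F : X → α.out → ℝ := fun x j => g' j x
  have hFc : Continuous F := continuous_pi fun j => hg'c j
  have hK : IsCompact (Set.range F) := hG F hFc
  have hcl : ∀ j, IsClosed {y : α.out → ℝ | y j = 0} := fun j =>
    isClosed_eq (continuous_apply j) continuous_const
  have hfin : ∀ u : Finset α.out,
      (Set.range F ∩ ⋂ j ∈ u, {y : α.out → ℝ | y j = 0}).Nonempty := by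
    intro u
    obtain ⟨x, hx⟩ := hfip u
    refine ⟨F x, Set.mem_range_self x, ?_⟩
    refine Set.mem_iInter₂.2 fun j hj => ?_
    exact (hg'0 j x).2 (hx j hj)
  obtain ⟨y, hyr, hy⟩ := hK.inter_iInter_nonempty (fun j => {y : α.out → ℝ | y j = 0}) hcl hfin
  obtain ⟨x, rfl⟩ := hyr
  exact ⟨x, fun j => (hg'0 j x).1 (Set.mem_iInter.1 hy j)⟩

private structure AuxStage (α : Cardinal.{u}) (G : Type u) [AddCommGroup G]
    [TopologicalSpace G] where
  pt : G
  N : AddSubgroup G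
  f : α.out → G → ℝ
  hN : N ∈ LambdaAlphaAdd α G
  hf : ∀ j, Continuous (f j)
  hsub : (N : Set G) ⊆ ⋂ j, f j ⁻¹' {0}

private def auxD [AddCommGroup G] [TopologicalSpace G] (s : AuxStage α G) : Set G :=
  {y | ∀ j, s.f j (y - s.pt) = 0}

private def auxE [AddCommGroup G] [TopologicalSpace G] (s : AuxStage α G) : Set G :=
  {y | y - s.pt ∈ s.N}

private lemma auxE_sub [AddCommGroup G] [TopologicalSpace G] (s : AuxStage α G) :
    auxE s ⊆ auxD s := by
  intro y hy j
  have h1 : y - s.pt ∈ ⋂ j, s.f j ⁻¹' {0} := s.hsub hy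
  have h2 := Set.mem_iInter.1 h1 j
  simpa using h2

private lemma pt_mem_auxD [AddCommGroup G] [TopologicalSpace G] (s : AuxStage α G) :
    s.pt ∈ auxD s := by
  refine auxE_sub s ?_
  show s.pt - s.pt ∈ s.N
  rw [sub_self]
  exact s.N.zero_mem

private lemma aux_step [AddCommGroup G] [TopologicalSpace G] [IsTopologicalAddGroup G]
    (hα : ℵ₀ ≤ α) (A : ℕ → AddSubgroup G)
    (hcon : ∀ (n : ℕ) (N : AddSubgroup G), N ∈ LambdaAlphaAdd α G →
      ∃ T : Set G, IsGAlphaSet α T ∧ ∃ t ∈ T, t ∈ N ∧ ∀ g ∈ (A n : Set G), g ∈ T → g ∉ N)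
    (s : AuxStage α G) (n : ℕ) :
    ∃ s' : AuxStage α G, auxD s' ⊆ auxE s ∧ ∀ y ∈ auxD s', y ∉ A n := by
  by_cases hcase : ∃ a, a ∈ A n ∧ a ∈ auxE s
  · obtain ⟨a, haA, haE⟩ := hcase
    obtain ⟨T, hT, t, htT, htN, havoid⟩ := hcon n s.N s.hN
    have hP : IsGAlphaSet α (((fun x => t + x) ⁻¹' T) ∩ (s.N : Set G)) :=
      GAlpha_inter hα (GAlpha_translate t hT) s.hN.2
    have h0P : (0 : G) ∈ ((fun x => t + x) ⁻¹' T) ∩ (s.N : Set G) :=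
      ⟨by simpa using htT, s.N.zero_mem⟩
    obtain ⟨N', f', hN', hf', hsub', hsup'⟩ := claimA hα hP h0P
    refine ⟨⟨a + t, N', f', hN', hf', hsub'⟩, ?_, ?_⟩
    · intro y hy
      have hz : y - (a + t) ∈ ((fun x => t + x) ⁻¹' T) ∩ (s.N : Set G) := by
        refine hsup' (Set.mem_iInter.2 fun j => ?_)
        simpa using hy j
      show y - s.pt ∈ s.N
      have heq : y - s.pt = a - s.pt + t + (y - (a + t)) := by abel
      rw [heq]
      exact add_mem (add_mem haE htN) hz.2
    · intro y hy hyA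
      have hz : y - (a + t) ∈ ((fun x => t + x) ⁻¹' T) ∩ (s.N : Set G) := by
        refine hsup' (Set.mem_iInter.2 fun j => ?_)
        simpa using hy j
      have hTm : t + (y - (a + t)) ∈ T := hz.1
      have hNm : t + (y - (a + t)) ∈ s.N := add_mem htN hz.2
      have hAm : t + (y - (a + t)) ∈ A n := by
        have heq : t + (y - (a + t)) = y - a := by abel
        rw [heq]
        exact sub_mem hyA haA
      exact havoid _ hAm hTm hNm
  · obtain ⟨N', f', hN', hf', hsub', hsup'⟩ := claimA hα s.hN.2 s.N.zero_mem
    refine ⟨⟨s.pt, N', f', hN', hf', hsub'⟩, ?_, ?_⟩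
    · intro y hy
      show y - s.pt ∈ s.N
      refine hsup' (Set.mem_iInter.2 fun j => ?_)
      simpa using hy j
    · intro y hy hyA
      refine hcase ⟨y, hyA, ?_⟩
      show y - s.pt ∈ s.N
      refine hsup' (Set.mem_iInter.2 fun j => ?_)
      simpa using hy j

end StatementTwelveAux

/-- if an `α`-pseudocompact abelian group `G` is a countable union of
subgroups `A n`, then some `A n ∩ N` is `G_α`-dense in some `N ∈ Λ_α(G)`. -/
theorem statement_12 (α : Cardinal.{u}) (hα : ℵ₀ ≤ α) (G : Type u) [AddCommGroup G]
    [TopologicalSpace G] [IsTopologicalAddGroup G] [T2Space G]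
    (hG : IsAlphaPseudocompact α G) (A : ℕ → AddSubgroup G)
    (hA : ∀ x : G, ∃ n : ℕ, x ∈ A n) :
    ∃ n : ℕ, ∃ N ∈ LambdaAlphaAdd α G,
      IsGAlphaDense α {x : ↥N | (x : G) ∈ A n} := by
  by_contra hmain
  push_neg at hmain
  have hcon : ∀ (n : ℕ) (N : AddSubgroup G), N ∈ LambdaAlphaAdd α G →
      ∃ T : Set G, IsGAlphaSet α T ∧ ∃ t ∈ T, t ∈ N ∧
        ∀ g ∈ ((A n : AddSubgroup G) : Set G), g ∈ T → g ∉ N := by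
    intro n N hN
    exact notDense_pull (hmain n N hN)
  have hTop : (⊤ : AddSubgroup G) ∈ LambdaAlphaAdd α G := by
    constructor
    · rw [AddSubgroup.coe_top]
      exact isClosed_univ
    · refine ⟨∅, fun U hU => absurd hU (Set.notMem_empty U), ?_, ?_⟩
      · rw [Cardinal.mk_emptyCollection]
        exact zero_le (a := α)
      · rw [AddSubgroup.coe_top, Set.sInter_empty]
  let s0 : AuxStage α G :=
    { pt := 0
      N := ⊤
      f := fun _ _ => 0
      hN := hTop
      hf := fun _ => continuous_const
      hsub := by
        intro x _
        refine Set.mem_iInter.2 fun j => ?_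
        simp }
  let seq : ℕ → AuxStage α G := fun k =>
    Nat.rec (aux_step hα A hcon s0 0).choose
      (fun k ih => (aux_step hα A hcon ih (k + 1)).choose) k
  have hseq0 : auxD (seq 0) ⊆ auxE s0 ∧ ∀ y ∈ auxD (seq 0), y ∉ A 0 :=
    (aux_step hα A hcon s0 0).choose_spec
  have hseqS : ∀ k, auxD (seq (k + 1)) ⊆ auxE (seq k) ∧
      ∀ y ∈ auxD (seq (k + 1)), y ∉ A (k + 1) :=
    fun k => (aux_step hα A hcon (seq k) (k + 1)).choose_spec
  have havoid : ∀ k, ∀ y ∈ auxD (seq k), y ∉ A k := by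
    intro k
    cases k with
    | zero => exact hseq0.2
    | succ k => exact (hseqS k).2
  have hchain : ∀ k, auxD (seq (k + 1)) ⊆ auxD (seq k) :=
    fun k => (hseqS k).1.trans (auxE_sub (seq k))
  have hanti : ∀ k l, k ≤ l → auxD (seq l) ⊆ auxD (seq k) := by
    intro k l hkl
    induction hkl with
    | refl => exact subset_rfl
    | step _ ih => exact (hchain _).trans ih
  have hprod : #(ℕ × α.out) = α := by
    rw [Cardinal.mk_prod, Cardinal.mk_nat, Cardinal.lift_aleph0, Cardinal.lift_uzero,
      Cardinal.mk_out]
    apply le_antisymm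
    · calc ℵ₀ * α ≤ α * α := mul_le_mul' hα le_rfl
        _ = α := Cardinal.mul_eq_self hα
    · exact le_mul_of_one_le_left (zero_le (a := α)) Cardinal.one_le_aleph0
  have hiso : #α.out = #(ℕ × α.out) := by
    rw [Cardinal.mk_out, hprod]
  obtain ⟨e⟩ := Cardinal.eq.1 hiso
  let g : α.out → G → ℝ := fun j y => (seq (e j).1).f (e j).2 (y - (seq (e j).1).pt)
  have hgc : ∀ j, Continuous (g j) :=
    fun j => ((seq (e j).1).hf (e j).2).comp (continuous_id.sub continuous_const)
  have hfip : ∀ u : Finset α.out, ∃ x : G, ∀ j ∈ u, g j x = 0 := by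
    intro u
    refine ⟨(seq (u.sup fun j => (e j).1)).pt, fun j hj => ?_⟩
    have hle : (e j).1 ≤ u.sup fun j => (e j).1 :=
      Finset.le_sup (f := fun j => (e j).1) hj
    have hmemD : (seq (u.sup fun j => (e j).1)).pt ∈ auxD (seq (e j).1) :=
      hanti _ _ hle (pt_mem_auxD _)
    exact hmemD (e j).2
  obtain ⟨x, hx⟩ := lemmaC hG g hgc hfip
  have hxD : ∀ k, x ∈ auxD (seq k) := by
    intro k
    intro j2
    have hx' : (seq (e (e.symm (k, j2))).1).f (e (e.symm (k, j2))).2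
        (x - (seq (e (e.symm (k, j2))).1).pt) = 0 := hx (e.symm (k, j2))
    have heq : e (e.symm (k, j2)) = (k, j2) := e.apply_symm_apply (k, j2)
    rw [heq] at hx'
    exact hx'
  obtain ⟨n, hn⟩ := hA x
  exact havoid n x (hxD n) hn
end

section
/- Let α be an infinite cardinal and let G be an α-pseudocompact abelian topological group. Then the following conditions are equivalent: (a) G is α-singular; (b) there exists a positive integer m such that G[m] = {x ∈ G : mx = 0} belongs to Λ_α(G); (c) G has a torsion closed subgroup that is a G_α-set of G; (d) there exists N ∈ Λ_α(G) contained in the torsion subgroup t(G) of G; (e) the completion of G is α-singular. -/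
open Cardinal Set Function Topology Pointwise

universe u

section Aux

open TopologicalSpace

/-! ### weight helpers -/

lemma tweight_le_of_basis {X : Type u} [TopologicalSpace X] {B : Set (Set X)}
    (hB : IsTopologicalBasis B) : tweight X ≤ #B :=
  csInf_le' ⟨B, hB, rfl⟩

lemma exists_basis_tweight (X : Type u) [TopologicalSpace X] :
    ∃ B : Set (Set X), IsTopologicalBasis B ∧ #B = tweight X := by
  have h : {c : Cardinal.{u} | ∃ B : Set (Set X), IsTopologicalBasis B ∧ #B = c}.Nonempty :=
    ⟨_, {U : Set X | IsOpen U}, isTopologicalBasis_opens, rfl⟩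
  obtain ⟨B, hB, hc⟩ := csInf_mem h
  exact ⟨B, hB, hc⟩

lemma tweight_le_of_embedding {X Y : Type u} [TopologicalSpace X] [TopologicalSpace Y]
    {f : X → Y} (hf : IsEmbedding f) : tweight X ≤ tweight Y := by
  obtain ⟨B, hB, hc⟩ := exists_basis_tweight Y
  calc tweight X ≤ #((Set.preimage f) '' B) :=
        tweight_le_of_basis (hB.isInducing hf.isInducing)
    _ ≤ #B := Cardinal.mk_image_le
    _ = tweight Y := hc

lemma tweight_le_of_openmap {X Y : Type u} [TopologicalSpace X] [TopologicalSpace Y]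
    {f : X → Y} (hc : Continuous f) (hf : IsOpenMap f) (hs : Function.Surjective f) :
    tweight Y ≤ tweight X := by
  obtain ⟨B, hB, hcard⟩ := exists_basis_tweight X
  have hbasis : IsTopologicalBasis ((Set.image f) '' B) := by
    refine isTopologicalBasis_of_isOpen_of_nhds ?_ ?_
    · rintro u ⟨b, hb, rfl⟩
      exact hf b (hB.isOpen hb)
    · intro y W hyW hW
      obtain ⟨x, rfl⟩ := hs y
      obtain ⟨b, hb, hxb, hbW⟩ := hB.exists_subset_of_mem_open (Set.mem_preimage.2 hyW)
        (hW.preimage hc)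
      exact ⟨f '' b, ⟨b, hb, rfl⟩, ⟨x, hxb, rfl⟩, by
        rintro _ ⟨z, hz, rfl⟩; exact hbW hz⟩
  calc tweight Y ≤ #((Set.image f) '' B) := tweight_le_of_basis hbasis
    _ ≤ #B := Cardinal.mk_image_le
    _ = tweight X := hcard

end Aux
section Chain

variable {K : Type u} [AddCommGroup K] [TopologicalSpace K] [IsTopologicalAddGroup K]

lemma chain_step (S : Set K) :
    ∃ B : Set K, (IsOpen S ∧ (0:K) ∈ S) →
      (IsOpen B ∧ (0:K) ∈ B ∧ (∀ x ∈ B, -x ∈ B) ∧ ∀ x ∈ B, ∀ y ∈ B, x + y ∈ S) := by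
  by_cases h : IsOpen S ∧ (0:K) ∈ S
  · obtain ⟨V, hVo, hV0, hVsum⟩ := exists_open_nhds_zero_half (h.1.mem_nhds h.2)
    refine ⟨V ∩ (fun x => -x) ⁻¹' V, fun _ => ?_⟩
    refine ⟨hVo.inter (hVo.preimage continuous_neg), ⟨hV0, by simpa using hV0⟩, ?_, ?_⟩
    · rintro x ⟨h1, h2⟩; exact ⟨h2, by simpa using h1⟩
    · rintro x ⟨h1, _⟩ y ⟨h3, _⟩; exact hVsum x h1 y h3
  · exact ⟨Set.univ, fun hc => absurd hc h⟩

lemma exists_symm_chain (T : ℕ → Set K) (hT : ∀ n, IsOpen (T n)) (hT0 : ∀ n, (0:K) ∈ T n) :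
    ∃ B : ℕ → Set K, (∀ n, IsOpen (B n)) ∧ (∀ n, (0:K) ∈ B n) ∧
      (∀ n, ∀ x ∈ B n, -x ∈ B n) ∧
      (∀ n, ∀ x ∈ B (n+1), ∀ y ∈ B (n+1), x + y ∈ B n) ∧ (∀ n, B n ⊆ T n) := by
  choose R hR using chain_step (K := K)
  set B : ℕ → Set K := fun n => Nat.rec (R (T 0)) (fun n Bn => R (Bn ∩ T (n+1))) n with hB
  have hbase : ∀ n, IsOpen (B n) ∧ (0:K) ∈ B n ∧ (∀ x ∈ B n, -x ∈ B n) ∧ B n ⊆ T n := by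
    intro n
    induction n with
    | zero =>
      obtain ⟨ho, h0, hsym, hsum⟩ := hR (T 0) ⟨hT 0, hT0 0⟩
      exact ⟨ho, h0, hsym, fun x hx => by simpa using hsum x hx 0 h0⟩
    | succ n ih =>
      obtain ⟨ho, h0, hsym, hsum⟩ := hR (B n ∩ T (n+1)) ⟨(ih.1).inter (hT (n+1)), ih.2.1, hT0 _⟩
      exact ⟨ho, h0, hsym, fun x hx => by simpa using (hsum x hx 0 h0).2⟩
  have hsum : ∀ n, ∀ x ∈ B (n+1), ∀ y ∈ B (n+1), x + y ∈ B n := by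
    intro n x hx y hy
    have hh := hbase n
    obtain ⟨ho, h0, hsym, hsum⟩ := hR (B n ∩ T (n+1)) ⟨(hh.1).inter (hT (n+1)), hh.2.1, hT0 _⟩
    exact (hsum x hx y hy).1
  exact ⟨B, fun n => (hbase n).1, fun n => (hbase n).2.1, fun n => (hbase n).2.2.1, hsum,
    fun n => (hbase n).2.2.2⟩

/-- The intersection of a symmetric chain is a closed subgroup-like set. -/
lemma chain_iInter_props {B : ℕ → Set K} (ho : ∀ n, IsOpen (B n)) (h0 : ∀ n, (0:K) ∈ B n)
    (hsym : ∀ n, ∀ x ∈ B n, -x ∈ B n)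
    (hsum : ∀ n, ∀ x ∈ B (n+1), ∀ y ∈ B (n+1), x + y ∈ B n) :
    (0:K) ∈ ⋂ n, B n ∧ (∀ x ∈ ⋂ n, B n, -x ∈ ⋂ n, B n) ∧
      (∀ x ∈ ⋂ n, B n, ∀ y ∈ ⋂ n, B n, x + y ∈ ⋂ n, B n) ∧ IsClosed (⋂ n, B n) := by
  have hmem : ∀ x, x ∈ (⋂ n, B n) ↔ ∀ n, x ∈ B n := fun x => Set.mem_iInter
  refine ⟨(hmem 0).2 fun n => h0 n, ?_, ?_, ?_⟩
  · intro x hx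
    exact (hmem _).2 fun n => hsym n x ((hmem x).1 hx n)
  · intro x hx y hy
    exact (hmem _).2 fun n => hsum n x ((hmem x).1 hx (n+1)) y ((hmem y).1 hy (n+1))
  · -- closedness
    have : closure (⋂ n, B n) ⊆ ⋂ n, B n := by
      intro x hx
      refine (hmem x).2 fun n => ?_
      have hxc : x ∈ closure (B (n+1)) :=
        closure_mono (Set.iInter_subset _ (n+1)) hx
      -- use the open neighbourhood {y | x - y ∈ B (n+1)} of x
      have hopen : IsOpen {y : K | x - y ∈ B (n+1)} :=
        (ho (n+1)).preimage (continuous_const.sub continuous_id)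
      have hxin : x ∈ {y : K | x - y ∈ B (n+1)} := by simp [h0 (n+1)]
      obtain ⟨a, ha1, ha2⟩ :=
        mem_closure_iff.1 hxc _ hopen hxin
      have : (x - a) + a ∈ B n := hsum n _ ha1 a ha2
      simpa using this
    exact isClosed_of_closure_subset this

end Chain
section Density

/-- An `α`-pseudocompact group is `G_α`-dense in any compact group in which it maps densely. -/
lemma galpha_dense {α : Cardinal.{u}} {G K : Type u} [AddCommGroup G]
    [TopologicalSpace G] [AddCommGroup K] [TopologicalSpace K] [T2Space K] [CompactSpace K]
    (hG : IsAlphaPseudocompact α G) (e : G →+ K) (hec : Continuous e)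
    (hd : DenseRange e) {S : Set K} (hS : IsGAlphaSet α S) (hne : S.Nonempty) :
    ∃ g : G, e g ∈ S := by
  obtain ⟨𝒰, hopen, hcard, rfl⟩ := hS
  obtain ⟨x, hx⟩ := hne
  -- an injection of the family into `α.out`
  have hle : #(↥𝒰) ≤ #(α.out) := by
    rwa [Cardinal.mk_out]
  obtain ⟨ι⟩ := (Cardinal.le_def _ _).1 hle
  -- Urysohn functions
  have hury : ∀ U : ↥𝒰, ∃ f : C(K, ℝ), Set.EqOn f 0 {x} ∧ Set.EqOn f 1 ((U : Set K)ᶜ) := by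
    intro U
    have h1 : IsClosed ({x} : Set K) := isClosed_singleton
    have h2 : IsClosed ((U : Set K)ᶜ) := (hopen U U.2).isClosed_compl
    have h3 : Disjoint ({x} : Set K) ((U : Set K)ᶜ) := by
      simp only [Set.disjoint_singleton_left, Set.mem_compl_iff, not_not]
      exact hx U U.2
    obtain ⟨f, hf0, hf1, _⟩ := exists_continuous_zero_one_of_isClosed h1 h2 h3
    exact ⟨f, hf0, hf1⟩
  choose f hf0 hf1 using hury
  classical
  -- bundle into a map to `ℝ^α`
  have hφ : ∀ a : α.out, ∃ φ : K → ℝ, Continuous φ ∧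
      ∀ U : ↥𝒰, ι U = a → φ = f U := by
    intro a
    by_cases h : ∃ U : ↥𝒰, ι U = a
    · refine ⟨f h.choose, (f h.choose).continuous, fun U hU => ?_⟩
      have : h.choose = U := ι.injective (h.choose_spec.trans hU.symm)
      rw [this]
    · exact ⟨fun _ => 0, continuous_const, fun U hU => absurd ⟨U, hU⟩ h⟩
  choose φ hφc hφeq using hφ
  set Φ : K → (α.out → ℝ) := fun y a => φ a y with hΦ
  have hΦc : Continuous Φ := continuous_pi fun a => hφc a
  have hcomp : IsCompact (Set.range (Φ ∘ e)) := hG (Φ ∘ e) (hΦc.comp hec)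
  have hclosed : IsClosed (Set.range (Φ ∘ e)) := hcomp.isClosed
  have hmem : Φ x ∈ Set.range (Φ ∘ e) := by
    have h1 : x ∈ closure (Set.range e) := hd x
    have h2 : Φ x ∈ closure (Φ '' Set.range e) :=
      image_closure_subset_closure_image hΦc ⟨x, h1, rfl⟩
    rw [← Set.range_comp] at h2
    rwa [hclosed.closure_eq] at h2
  obtain ⟨g, hg⟩ := hmem
  refine ⟨g, ?_⟩
  intro U hU
  set U' : ↥𝒰 := ⟨U, hU⟩
  have heq : φ (ι U') = f U' := hφeq _ U' rfl
  have h1 : φ (ι U') (e g) = φ (ι U') x := congrFun hg (ι U')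
  rw [heq] at h1
  have h2 : (f U') x = 0 := hf0 U' rfl
  by_contra hnot
  have h3 : (f U') (e g) = 1 := hf1 U' hnot
  rw [h3, h2] at h1
  exact one_ne_zero h1

end Density
section SecondCountable

open TopologicalSpace

variable {K : Type u} [AddCommGroup K] [TopologicalSpace K] [IsTopologicalAddGroup K]

/-- A compact Hausdorff group in which `{0}` is a countable intersection of open sets
has a countable basis. -/
lemma compact_group_second_countable [CompactSpace K] [T2Space K]
    (O : ℕ → Set K) (hO : ∀ n, IsOpen (O n)) (hO0 : ∀ n, (0:K) ∈ O n)
    (hsing : (⋂ n, O n) = {0}) :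
    ∃ B : Set (Set K), IsTopologicalBasis B ∧ #B ≤ Cardinal.aleph0 := by
  classical
  -- shrink to closures
  have hshrink : ∀ n, ∃ U : Set K, IsOpen U ∧ (0:K) ∈ U ∧ closure U ⊆ O n := by
    intro n
    obtain ⟨t, ht, htc, hts⟩ := exists_mem_nhds_isClosed_subset ((hO n).mem_nhds (hO0 n))
    refine ⟨interior t, isOpen_interior, mem_interior_iff_mem_nhds.2 ht, ?_⟩
    exact (closure_mono interior_subset).trans (htc.closure_subset.trans hts)
  choose U hUo hU0 hUcl using hshrink
  -- monotone neighbourhood base of `0`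
  set W : ℕ → Set K := fun n => ⋂ k ∈ Finset.range (n+1), U k with hW
  have hWo : ∀ n, IsOpen (W n) := fun n => isOpen_biInter_finset fun k _ => hUo k
  have hW0 : ∀ n, (0:K) ∈ W n := fun n => Set.mem_biInter fun k _ => hU0 k
  have hWbase : ∀ V : Set K, IsOpen V → (0:K) ∈ V → ∃ n, W n ⊆ V := by
    intro V hVo hV0
    have hcov : Vᶜ ⊆ ⋃ n, (closure (U n))ᶜ := by
      intro y hy
      have hy0 : y ≠ 0 := fun h => hy (h ▸ hV0)
      have : y ∉ ⋂ n, O n := by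
        rw [hsing]; simpa using hy0
      obtain ⟨n, hn⟩ : ∃ n, y ∉ O n := by simpa using this
      exact Set.mem_iUnion.2 ⟨n, fun hc => hn (hUcl n hc)⟩
    have hVc : IsCompact (Vᶜ) := hVo.isClosed_compl.isCompact
    obtain ⟨F, hF⟩ := hVc.elim_finite_subcover _ (fun n => (isClosed_closure).isOpen_compl) hcov
    by_cases hFne : F.Nonempty
    · refine ⟨F.max' hFne, fun z hz => ?_⟩
      by_contra hzV
      obtain ⟨n, hnF, hn⟩ := Set.mem_iUnion₂.1 (hF hzV)
      refine hn (subset_closure ?_)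
      have : n < F.max' hFne + 1 := Nat.lt_succ_of_le (F.le_max' n hnF)
      exact Set.mem_iInter₂.1 hz n (Finset.mem_range.2 this)
    · refine ⟨0, fun z hz => ?_⟩
      by_contra hzV
      obtain ⟨n, hnF, _⟩ := Set.mem_iUnion₂.1 (hF hzV)
      exact hFne ⟨n, hnF⟩
  -- symmetric chain inside the `W n`
  obtain ⟨B, hBo, hB0, hBsym, hBsum, hBsub⟩ := exists_symm_chain W hWo hW0
  have hBbase : ∀ V : Set K, IsOpen V → (0:K) ∈ V → ∃ n, B n ⊆ V := by
    intro V hVo hV0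
    obtain ⟨n, hn⟩ := hWbase V hVo hV0
    exact ⟨n, (hBsub n).trans hn⟩
  -- finite covers by translates
  have hcover : ∀ n, ∃ F : Finset K, Set.univ ⊆ ⋃ x ∈ F, {y : K | y - x ∈ B n} := by
    intro n
    have h1 : ∀ x : K, IsOpen {y : K | y - x ∈ B n} :=
      fun x => (hBo n).preimage (continuous_id.sub continuous_const)
    have h2 : Set.univ ⊆ ⋃ x : K, {y : K | y - x ∈ B n} := by
      intro y _; exact Set.mem_iUnion.2 ⟨y, by simp [hB0 n]⟩
    exact isCompact_univ.elim_finite_subcover _ h1 h2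
  choose F hF using hcover
  set 𝔅 : Set (Set K) := ⋃ n, (fun x => {y : K | y - x ∈ B (n+1)}) '' (F (n+1) : Set K) with h𝔅
  have hcount : 𝔅.Countable :=
    Set.countable_iUnion fun n => ((F (n+1)).finite_toSet.image _).countable
  refine ⟨𝔅, ?_, (Cardinal.mk_le_aleph0_iff.2 (Set.countable_coe_iff.1 ?_))⟩
  swap
  · exact Set.countable_coe_iff.2 hcount
  refine isTopologicalBasis_of_isOpen_of_nhds ?_ ?_
  · rintro u hu
    obtain ⟨n, hn⟩ := Set.mem_iUnion.1 hu
    obtain ⟨x, _, rfl⟩ := hn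
    exact (hBo (n+1)).preimage (continuous_id.sub continuous_const)
  · intro y V hyV hVo
    -- find n with y + B n ⊆ V
    have hV' : IsOpen {v : K | y + v ∈ V} := hVo.preimage (continuous_const.add continuous_id)
    have hV'0 : (0:K) ∈ {v : K | y + v ∈ V} := by simpa using hyV
    obtain ⟨n, hn⟩ := hBbase _ hV' hV'0
    -- find a covering translate at level n+1
    have := hF (n+1) (Set.mem_univ y)
    obtain ⟨x, hxF, hyx⟩ := Set.mem_iUnion₂.1 this
    refine ⟨{z : K | z - x ∈ B (n+1)}, Set.mem_iUnion.2 ⟨n, ⟨x, hxF, rfl⟩⟩, hyx, ?_⟩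
    intro z hz
    have h1 : z - x ∈ B (n+1) := hz
    have h2 : -(y - x) ∈ B (n+1) := hBsym _ _ hyx
    have h3 : (z - x) + -(y - x) ∈ B n := hBsum n _ h1 _ h2
    have h4 : y + ((z - x) + -(y - x)) ∈ V := hn h3
    have : y + ((z - x) + -(y - x)) = z := by abel
    rwa [this] at h4

end SecondCountable
section PiWeight

open TopologicalSpace

lemma tweight_pi_le {ι : Type u} (Q : ι → Type u) [∀ i, TopologicalSpace (Q i)]
    {α : Cardinal.{u}} (hα : Cardinal.aleph0 ≤ α) (hι : #ι ≤ α)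
    (hQ : ∀ i, ∃ B : Set (Set (Q i)), IsTopologicalBasis B ∧ #B ≤ Cardinal.aleph0) :
    tweight (∀ i, Q i) ≤ α := by
  classical
  choose B hB hBcard using hQ
  have hbasis := isTopologicalBasis_pi hB
  set 𝔅 : Set (Set (∀ i, Q i)) := { S | ∃ (U : ∀ i, Set (Q i)) (F : Finset ι),
      (∀ i, i ∈ F → U i ∈ B i) ∧ S = (F : Set ι).pi U } with h𝔅
  have h1 : tweight (∀ i, Q i) ≤ #𝔅 := tweight_le_of_basis hbasis
  -- surjection from a sigma type
  set D := Σ F : Finset ι, (∀ j : {x // x ∈ F}, {s : Set (Q j.1) // s ∈ B j.1}) with hD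
  set τ : D → Set (∀ i, Q i) := fun p =>
    (p.1 : Set ι).pi (fun j => if h : j ∈ p.1 then (p.2 ⟨j, h⟩ : Set (Q j)) else Set.univ)
    with hτ
  have hsub : 𝔅 ⊆ Set.range τ := by
    rintro S ⟨U, F, hU, rfl⟩
    refine ⟨⟨F, fun j => ⟨U j.1, hU j.1 j.2⟩⟩, ?_⟩
    simp only [hτ]
    refine Set.pi_congr rfl fun i hi => ?_
    simp [Finset.mem_coe.1 hi]
  have h2 : #𝔅 ≤ #D := by
    calc #𝔅 ≤ #(Set.range τ) := Cardinal.mk_le_mk_of_subset hsub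
      _ ≤ #D := Cardinal.mk_range_le
  have h3 : #D ≤ #(Finset ι) * Cardinal.aleph0 := by
    rw [hD, Cardinal.mk_sigma]
    calc (Cardinal.sum fun F : Finset ι => #(∀ j : {x // x ∈ F}, {s : Set (Q j.1) // s ∈ B j.1}))
        ≤ Cardinal.sum fun _ : Finset ι => Cardinal.aleph0 := by
          refine Cardinal.sum_le_sum _ _ fun F => ?_
          have : ∀ j : {x // x ∈ F}, Countable {s : Set (Q j.1) // s ∈ B j.1} := by
            intro j
            exact Cardinal.mk_le_aleph0_iff.1 (hBcard j.1)
          exact Cardinal.mk_le_aleph0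
      _ = #(Finset ι) * Cardinal.aleph0 := Cardinal.sum_const' _ _
  have h4 : #(Finset ι) ≤ α := by
    rcases isEmpty_or_nonempty ι with hc | hc
    · exact le_trans Cardinal.mk_le_aleph0 hα
    · have hsurj : Function.Surjective (fun l : List ι => l.toFinset) := by
        intro F; exact ⟨F.toList, by simp⟩
      calc #(Finset ι) ≤ #(List ι) := Cardinal.mk_le_of_surjective hsurj
        _ = max #ι Cardinal.aleph0 := Cardinal.mk_list_eq_max_mk_aleph0 ι
        _ ≤ α := max_le hι hα
  calc tweight (∀ i, Q i) ≤ #(Finset ι) * Cardinal.aleph0 := h1.trans (h2.trans h3)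
    _ ≤ α * α := mul_le_mul' h4 hα
    _ = α := Cardinal.mul_eq_self hα

end PiWeight
section Main

open TopologicalSpace

/-- Key step: (d) implies that the completion is `α`-singular. -/
lemma key_d_to_e {α : Cardinal.{u}} (hα : Cardinal.aleph0 ≤ α) {G K : Type u} [AddCommGroup G]
    [TopologicalSpace G] [IsTopologicalAddGroup G] [T2Space G]
    [AddCommGroup K] [TopologicalSpace K] [IsTopologicalAddGroup K] [T2Space K]
    [CompactSpace K]
    (hG : IsAlphaPseudocompact α G) (e : G →+ K) (he : IsEmbedding e)
    (hd : DenseRange e) (N : AddSubgroup G) (hNmem : N ∈ LambdaAlphaAdd α G)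
    (hNtor : ∀ x ∈ N, IsOfFinAddOrder x) : IsAlphaSingular α K := by
  classical
  obtain ⟨hNcl, 𝒰, hUo, hUcard, hUeq⟩ := hNmem
  have h0N : (0:G) ∈ ⋂₀ 𝒰 := by rw [← hUeq]; exact N.zero_mem
  -- choose open sets in K inducing the U's
  have hW : ∀ i : ↥𝒰, ∃ W : Set K, IsOpen W ∧ e ⁻¹' W = (i : Set G) := by
    intro i
    obtain ⟨W, hWo, hWeq⟩ := he.isInducing.isOpen_iff.1 (hUo i i.2)
    exact ⟨W, hWo, hWeq⟩
  choose W hWo hWeq using hW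
  have hW0 : ∀ i : ↥𝒰, (0:K) ∈ W i := by
    intro i
    have : (0:G) ∈ e ⁻¹' (W i) := by
      rw [hWeq i]; exact h0N i i.2
    simpa [map_zero] using this
  -- symmetric chains below each W i
  have hch : ∀ i : ↥𝒰, ∃ V : ℕ → Set K, (∀ n, IsOpen (V n)) ∧ (∀ n, (0:K) ∈ V n) ∧
      (∀ n, ∀ x ∈ V n, -x ∈ V n) ∧
      (∀ n, ∀ x ∈ V (n+1), ∀ y ∈ V (n+1), x + y ∈ V n) ∧ (∀ n, V n ⊆ W i) :=
    fun i => exists_symm_chain (fun _ => W i) (fun _ => hWo i) (fun _ => hW0 i)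
  choose V hVo hV0 hVsym hVsum hVsub using hch
  -- the small closed subgroups
  have hiprops := fun i : ↥𝒰 => chain_iInter_props (hVo i) (hV0 i) (hVsym i) (hVsum i)
  set ℍi : ↥𝒰 → AddSubgroup K := fun i =>
    { carrier := ⋂ n, V i n
      zero_mem' := (hiprops i).1
      neg_mem' := fun hx => (hiprops i).2.1 _ hx
      add_mem' := fun hx hy => (hiprops i).2.2.1 _ hx _ hy } with hℍi
  have hℍicl : ∀ i, IsClosed ((ℍi i : Set K)) := fun i => (hiprops i).2.2.2
  have hℍisub : ∀ i n, ((ℍi i : Set K)) ⊆ V i n := fun i n => Set.iInter_subset _ n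
  -- the big closed subgroup
  set Hs : Set K := ⋂ i : ↥𝒰, (ℍi i : Set K) with hHs
  have hH0 : (0:K) ∈ Hs := Set.mem_iInter.2 fun i => (ℍi i).zero_mem
  have hHneg : ∀ x ∈ Hs, -x ∈ Hs := fun x hx =>
    Set.mem_iInter.2 fun i => (ℍi i).neg_mem (Set.mem_iInter.1 hx i)
  have hHadd : ∀ x ∈ Hs, ∀ y ∈ Hs, x + y ∈ Hs := fun x hx y hy =>
    Set.mem_iInter.2 fun i => (ℍi i).add_mem (Set.mem_iInter.1 hx i) (Set.mem_iInter.1 hy i)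
  have hHcl : IsClosed Hs := isClosed_iInter fun i => hℍicl i
  have hHcomp : IsCompact Hs := hHcl.isCompact
  -- G_α presentation of Hs
  set 𝒱 : Set (Set K) := Set.range (fun p : ↥𝒰 × ℕ => V p.1 p.2) with h𝒱
  have h𝒱o : ∀ S ∈ 𝒱, IsOpen S := by rintro S ⟨p, rfl⟩; exact hVo p.1 p.2
  have h𝒱card : #𝒱 ≤ α := by
    refine Cardinal.mk_range_le.trans ?_
    have : #(↥𝒰 × ℕ) = #(↥𝒰) * Cardinal.aleph0 := by
      simp [Cardinal.mk_prod, Cardinal.lift_uzero, Cardinal.mk_nat]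
    rw [this]
    calc #(↥𝒰) * Cardinal.aleph0 ≤ α * α := mul_le_mul' hUcard hα
      _ = α := Cardinal.mul_eq_self hα
  have h𝒱eq : Hs = ⋂₀ 𝒱 := by
    rw [h𝒱, Set.sInter_range]
    ext x
    simp only [Set.mem_iInter, hHs, Prod.forall]
    constructor
    · intro h p n; exact Set.mem_iInter.1 (h p) n
    · intro h i; exact Set.mem_iInter.2 fun n => h i n
  have hHGa : IsGAlphaSet α Hs := ⟨𝒱, h𝒱o, h𝒱card, h𝒱eq⟩
  -- points of G inside Hs lie in N
  have htrace : ∀ g : G, e g ∈ Hs → g ∈ N := by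
    intro g hg
    have : ∀ i : ↥𝒰, g ∈ (i : Set G) := by
      intro i
      have h1 : e g ∈ V i 0 := Set.mem_iInter.1 (Set.mem_iInter.1 hg i) 0
      have h2 : e g ∈ W i := hVsub i 0 h1
      have : g ∈ e ⁻¹' W i := h2
      rwa [hWeq i] at this
    have : g ∈ ⋂₀ 𝒰 := fun U hU => this ⟨U, hU⟩
    rw [← hUeq] at this
    exact this
  -- Baire category: some multiplication kills a relatively open piece of Hs
  have hkey : ∃ n : ℕ, 0 < n ∧ ∃ x ∈ Hs, ∃ Uo : Set K, IsOpen Uo ∧ x ∈ Uo ∧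
      ∀ y ∈ Uo ∩ Hs, n • y = 0 := by
    by_contra hno
    push_neg at hno
    haveI : CompactSpace ↥Hs := isCompact_iff_compactSpace.1 hHcomp
    haveI : Nonempty ↥Hs := ⟨⟨0, hH0⟩⟩
    have hOopen : ∀ n : ℕ, IsOpen {y : K | (n+1) • y ≠ 0} := by
      intro n
      have hcl : IsClosed {y : K | (n+1) • y = 0} :=
        isClosed_eq (continuous_nsmul (n+1)) continuous_const
      rw [show {y : K | (n+1) • y ≠ 0} = {y : K | (n+1) • y = 0}ᶜ from rfl]
      exact hcl.isOpen_compl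
    have hDopen : ∀ n : ℕ, IsOpen {y : ↥Hs | (n+1) • (y:K) ≠ 0} :=
      fun n => (hOopen n).preimage continuous_subtype_val
    have hDdense : ∀ n : ℕ, Dense {y : ↥Hs | (n+1) • (y:K) ≠ 0} := by
      intro n
      rw [dense_iff_inter_open]
      rintro O hO ⟨⟨x, hxH⟩, hxO⟩
      obtain ⟨t, hto, hteq⟩ := isOpen_induced_iff.1 hO
      have hxt : x ∈ t := by
        rw [← hteq] at hxO; exact hxO
      obtain ⟨y, hy, hy0⟩ := hno (n+1) (Nat.succ_pos n) x hxH t hto hxt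
      exact ⟨⟨y, hy.2⟩, by rw [← hteq]; exact hy.1, hy0⟩
    have hdense : Dense (⋂ n : ℕ, {y : ↥Hs | (n+1) • (y:K) ≠ 0}) :=
      dense_iInter_of_isOpen hDopen hDdense
    obtain ⟨ξ, hξ⟩ := hdense.nonempty
    set SS : Set K := Hs ∩ ⋂ n : ℕ, {y : K | (n+1) • y ≠ 0} with hSS
    have hSSne : SS.Nonempty := by
      refine ⟨(ξ : K), ξ.2, Set.mem_iInter.2 fun n => ?_⟩
      exact Set.mem_iInter.1 hξ n
    have hSSGa : IsGAlphaSet α SS := by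
      refine ⟨𝒱 ∪ Set.range (fun n : ℕ => {y : K | (n+1) • y ≠ 0}), ?_, ?_, ?_⟩
      · rintro S (hS | ⟨n, rfl⟩)
        · exact h𝒱o S hS
        · exact hOopen n
      · refine (Cardinal.mk_union_le _ _).trans ?_
        have h2 : #(Set.range (fun n : ℕ => {y : K | (n+1) • y ≠ 0})) ≤ Cardinal.aleph0 :=
          Cardinal.mk_le_aleph0_iff.2
            (Set.countable_range (fun n : ℕ => {y : K | (n+1) • y ≠ 0})).to_subtype
        calc #𝒱 + _ ≤ α + α := add_le_add h𝒱card (h2.trans hα)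
          _ = α := Cardinal.add_eq_self hα
      · rw [Set.sInter_union, ← h𝒱eq, Set.sInter_range]
    obtain ⟨g, hg⟩ := galpha_dense hG e he.continuous hd hSSGa hSSne
    have hgN : g ∈ N := htrace g hg.1
    obtain ⟨k, hk, hk0⟩ := (hNtor g hgN).exists_nsmul_eq_zero
    have h1 : (k - 1 + 1) • (e g) ≠ 0 := Set.mem_iInter.1 hg.2 (k-1)
    have h2 : k - 1 + 1 = k := Nat.succ_pred_eq_of_pos hk
    rw [h2] at h1
    exact h1 (by rw [← map_nsmul, hk0, map_zero])
  obtain ⟨n₀, hn₀, x₀, hx₀H, U₀, hU₀o, hx₀U, hsat⟩ := hkey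
  have hx₀0 : n₀ • x₀ = 0 := hsat x₀ ⟨hx₀U, hx₀H⟩
  -- finite cover by translates
  obtain ⟨t, ht⟩ := hHcomp.elim_finite_subcover (fun z : ↥Hs => {y : K | y - ↑z + x₀ ∈ U₀})
    (fun z : ↥Hs => by
      show IsOpen {y : K | y - (z:K) + x₀ ∈ U₀}
      exact hU₀o.preimage ((continuous_id.sub continuous_const).add continuous_const))
    (fun y hy => Set.mem_iUnion.2 ⟨⟨y, hy⟩, by simp [hx₀U]⟩)
  have hkey2 : ∀ y ∈ Hs, ∃ z ∈ t, n₀ • (y - (z:K)) = 0 := by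
    intro y hy
    obtain ⟨z, hzt, hyz⟩ := Set.mem_iUnion₂.1 (ht hy)
    refine ⟨z, hzt, ?_⟩
    have hmemH : y - (z:K) + x₀ ∈ Hs := by
      rw [sub_eq_add_neg]
      exact hHadd _ (hHadd y hy _ (hHneg _ z.2)) _ hx₀H
    have h1 : n₀ • (y - (z:K) + x₀) = 0 := hsat _ ⟨hyz, hmemH⟩
    rw [smul_add, hx₀0, add_zero] at h1
    exact h1
  -- pigeonhole: bounded exponent
  set m : ℕ := n₀ * (t.card).factorial with hm
  have hmpos : 0 < m := Nat.mul_pos hn₀ (Nat.factorial_pos _)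
  have hbound : ∀ y ∈ Hs, m • y = 0 := by
    intro y hy
    have hsm : ∀ i : ℕ, i • y ∈ Hs := by
      intro i
      induction i with
      | zero => simpa using hH0
      | succ i ih => rw [succ_nsmul]; exact hHadd _ ih _ hy
    have hch' : ∀ i : ℕ, ∃ z ∈ t, n₀ • (i • y - (z:K)) = 0 := fun i => hkey2 _ (hsm i)
    choose z hz hz0 using hch'
    have hmap : ∀ i ∈ Finset.range (t.card + 1), z i ∈ t := fun i _ => hz i
    have hlt : t.card < (Finset.range (t.card+1)).card := by simp
    obtain ⟨i, hi, j, hj, hij, hzeq⟩ := Finset.exists_ne_map_eq_of_card_lt_of_maps_to hlt hmap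
    have main : ∀ a b : ℕ, a < b → b < t.card + 1 → z a = z b → m • y = 0 := by
      intro a b hab hbc hzab
      set d : ℕ := b - a with hd
      have hd1 : 0 < d := Nat.sub_pos_of_lt hab
      have hd2 : d ≤ t.card := le_trans (Nat.sub_le b a) (Nat.lt_succ_iff.1 hbc)
      have hdstep : n₀ • (d • y) = 0 := by
        have h1 : n₀ • (b • y - (z b : K)) = 0 := hz0 b
        have h2 : n₀ • (a • y - (z a : K)) = 0 := hz0 a
        rw [hzab] at h2
        have h3 : n₀ • (b • y - a • y) = 0 := by
          have : (b • y - (z b : K)) - (a • y - (z b : K)) = b • y - a • y := by abel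
          rw [← this, nsmul_sub, h1, h2, sub_zero]
        have h4 : b • y - a • y = d • y := by
          have : d + a = b := Nat.sub_add_cancel hab.le
          rw [← this, add_nsmul]
          abel
        rwa [h4] at h3
      obtain ⟨c, hc⟩ := Nat.dvd_factorial hd1 hd2
      have : m • y = c • (n₀ • (d • y)) := by
        rw [smul_smul, smul_smul, hm, hc]
        congr 1
        ring
      rw [this, hdstep, smul_zero]
    rcases hij.lt_or_gt with h | h
    · exact main i j h (Finset.mem_range.1 hj) hzeq
    · exact main j i h (Finset.mem_range.1 hi) hzeq.symm
  -- quotient groups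
  set ℍ : AddSubgroup K :=
    { carrier := Hs
      zero_mem' := hH0
      neg_mem' := fun hx => hHneg _ hx
      add_mem' := fun hx hy => hHadd _ hx _ hy } with hℍ
  -- countable bases for the small quotients
  have hQi : ∀ i : ↥𝒰, ∃ B : Set (Set (K ⧸ ℍi i)), IsTopologicalBasis B ∧
      Cardinal.mk B ≤ Cardinal.aleph0 := by
    intro i
    haveI : IsClosed ((ℍi i : Set K)) := hℍicl i
    refine compact_group_second_countable
      (fun n => (QuotientAddGroup.mk : K → K ⧸ ℍi i) '' V i n)
      (fun n => QuotientAddGroup.isOpenMap_coe _ (hVo i n)) (fun n => ⟨0, hV0 i n, rfl⟩) ?_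
    ext q
    simp only [Set.mem_iInter, Set.mem_singleton_iff]
    constructor
    · intro hq
      obtain ⟨x, rfl⟩ := QuotientAddGroup.mk_surjective q
      have hx : ∀ k, x ∈ V i k := by
        intro k
        obtain ⟨v, hv, hveq⟩ := hq (k+1)
        have hdiff : v - x ∈ ℍi i := by
          rwa [QuotientAddGroup.eq_iff_sub_mem] at hveq
        have h1 : -(v - x) ∈ V i (k+1) := hVsym i (k+1) _ (hℍisub i (k+1) hdiff)
        have h2 : v + -(v - x) ∈ V i k := hVsum i k v hv _ h1
        simpa using h2
      have hxH : x ∈ ℍi i := Set.mem_iInter.2 hx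
      exact (QuotientAddGroup.eq_zero_iff x).2 hxH
    · rintro rfl k
      exact ⟨0, hV0 i k, rfl⟩
  -- T2 for the small quotients
  haveI hQiT2 : ∀ i : ↥𝒰, T2Space (K ⧸ ℍi i) := by
    intro i
    haveI : IsClosed ((ℍi i : Set K)) := hℍicl i
    infer_instance
  -- the embedding of K ⧸ ℍ into the product
  set f₀ : K →+ ∀ i : ↥𝒰, K ⧸ ℍi i :=
    AddMonoidHom.mk' (fun x i => (QuotientAddGroup.mk x : K ⧸ ℍi i))
      (fun a b => funext fun i => by
        exact (QuotientAddGroup.mk' (ℍi i)).map_add a b) with hf₀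
  have hf₀ker : ∀ x ∈ ℍ, f₀ x = 0 := by
    intro x hx
    funext i
    exact (QuotientAddGroup.eq_zero_iff x).2 (Set.mem_iInter.1 hx i)
  set Φ : K ⧸ ℍ →+ ∀ i : ↥𝒰, K ⧸ ℍi i := QuotientAddGroup.lift ℍ f₀ hf₀ker with hΦ
  have hΦcont : Continuous Φ := by
    rw [(QuotientAddGroup.isQuotientMap_mk ℍ).continuous_iff]
    exact continuous_pi fun i => continuous_quot_mk
  have hΦinj : Function.Injective Φ := by
    intro a b hab
    obtain ⟨x, rfl⟩ := QuotientAddGroup.mk_surjective a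
    obtain ⟨y, rfl⟩ := QuotientAddGroup.mk_surjective b
    have : ∀ i : ↥𝒰, (QuotientAddGroup.mk x : K ⧸ ℍi i) = QuotientAddGroup.mk y :=
      fun i => congrFun hab i
    have hxy : x - y ∈ ℍ := by
      refine Set.mem_iInter.2 fun i => ?_
      exact (QuotientAddGroup.eq_iff_sub_mem).1 (this i)
    exact (QuotientAddGroup.eq_iff_sub_mem).2 hxy
  have hQw : tweight (K ⧸ ℍ) ≤ α := by
    have hce := hΦcont.isClosedEmbedding hΦinj
    exact (tweight_le_of_embedding hce.toIsEmbedding).trans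
      (tweight_pi_le _ hα hUcard hQi)
  -- quotient onto K ⧸ ker (x ↦ m • x)
  have hle : ℍ ≤ ((nsmulHom m K).ker).comap (AddMonoidHom.id K) := by
    intro x hx
    simp only [AddSubgroup.mem_comap, AddMonoidHom.id_apply, AddMonoidHom.mem_ker]
    exact hbound x hx
  set ρ : K ⧸ ℍ →+ K ⧸ (nsmulHom m K).ker :=
    QuotientAddGroup.map ℍ ((nsmulHom m K).ker) (AddMonoidHom.id K) hle with hρ
  have hρmk : ∀ x : K, ρ (QuotientAddGroup.mk x) = QuotientAddGroup.mk x :=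
    fun x => QuotientAddGroup.map_mk ℍ _ (AddMonoidHom.id K) hle x
  have hρcont : Continuous ρ := by
    rw [(QuotientAddGroup.isQuotientMap_mk ℍ).continuous_iff]
    have : (ρ ∘ (QuotientAddGroup.mk : K → K ⧸ ℍ)) =
        (QuotientAddGroup.mk : K → K ⧸ (nsmulHom m K).ker) := funext fun x => hρmk x
    rw [this]
    exact continuous_quot_mk
  have hρsurj : Function.Surjective ρ := by
    intro q
    obtain ⟨x, rfl⟩ := QuotientAddGroup.mk_surjective q
    exact ⟨QuotientAddGroup.mk x, hρmk x⟩
  have hρopen : IsOpenMap ρ := by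
    intro O hO
    have himg : ρ '' O = (QuotientAddGroup.mk : K → K ⧸ (nsmulHom m K).ker) ''
        ((QuotientAddGroup.mk : K → K ⧸ ℍ) ⁻¹' O) := by
      ext q
      constructor
      · rintro ⟨p, hp, rfl⟩
        obtain ⟨x, rfl⟩ := QuotientAddGroup.mk_surjective p
        exact ⟨x, hp, (hρmk x).symm⟩
      · rintro ⟨x, hx, rfl⟩
        exact ⟨QuotientAddGroup.mk x, hx, hρmk x⟩
    rw [himg]
    exact QuotientAddGroup.isOpenMap_coe _ (hO.preimage continuous_quot_mk)
  have hRw : tweight (K ⧸ (nsmulHom m K).ker) ≤ α :=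
    (tweight_le_of_openmap hρcont hρopen hρsurj).trans hQw
  -- K ⧸ ker ≃ range, transported via a continuous bijective open map
  set h₁ : K →+ ↥(nsmulHom m K).range := (nsmulHom m K).rangeRestrict with hh₁
  have hker' : ∀ x ∈ (nsmulHom m K).ker, h₁ x = 0 := by
    intro x hx
    have hx' : (nsmulHom m K) x = 0 := hx
    apply Subtype.ext
    simp [hh₁, AddMonoidHom.coe_rangeRestrict, hx']
  set ψ : K ⧸ (nsmulHom m K).ker →+ ↥(nsmulHom m K).range :=
    QuotientAddGroup.lift _ h₁ hker' with hψ
  have hψmk : ∀ x : K, ψ (QuotientAddGroup.mk x) = h₁ x := fun x => rfl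
  have hψcont : Continuous ψ := by
    rw [(QuotientAddGroup.isQuotientMap_mk _).continuous_iff]
    show Continuous fun x : K => ψ (QuotientAddGroup.mk x)
    simp only [hψmk]
    exact Continuous.subtype_mk (continuous_nsmul m) _
  have hψsurj : Function.Surjective ψ := by
    rintro ⟨y, g, rfl⟩
    exact ⟨QuotientAddGroup.mk g, Subtype.ext rfl⟩
  have hψinj : Function.Injective ψ := by
    intro a b hab
    obtain ⟨x, rfl⟩ := QuotientAddGroup.mk_surjective a
    obtain ⟨y, rfl⟩ := QuotientAddGroup.mk_surjective b
    have h1 : (h₁ x : K) = h₁ y := by rw [hψmk x, hψmk y] at hab; exact congrArg _ hab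
    have h2 : m • x = m • y := by
      rw [hh₁, AddMonoidHom.coe_rangeRestrict, AddMonoidHom.coe_rangeRestrict] at h1
      exact h1
    have h3 : x - y ∈ (nsmulHom m K).ker := by
      rw [AddMonoidHom.mem_ker]
      show m • (x - y) = 0
      rw [smul_sub, h2, sub_self]
    exact (QuotientAddGroup.eq_iff_sub_mem).2 h3
  have hψclosed : IsClosedMap ψ := hψcont.isClosedMap
  have hψopen : IsOpenMap ψ := by
    intro O hO
    have h1 : ψ '' O = (ψ '' Oᶜ)ᶜ := by
      rw [Set.image_compl_eq ⟨hψinj, hψsurj⟩, compl_compl]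
    rw [h1]
    exact (hψclosed _ hO.isClosed_compl).isOpen_compl
  refine ⟨m, hmpos, ?_⟩
  exact (tweight_le_of_openmap hψcont hψopen hψsurj).trans hRw

end Main

/-- for an `α`-pseudocompact abelian group `G` (given with its compact
completion `K`, i.e. a compact abelian group in which `G` embeds densely) TFAE:
(a) `G` is `α`-singular; (b) `G[m] ∈ Λ_α(G)` for some `m > 0`; (c) `G` has a torsion
closed `G_α`-subgroup; (d) some `N ∈ Λ_α(G)` is contained in the torsion subgroup;
(e) the completion `K` is `α`-singular. -/
theorem statement_18 (α : Cardinal.{u}) (hα : ℵ₀ ≤ α) (G K : Type u) [AddCommGroup G]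
    [TopologicalSpace G] [IsTopologicalAddGroup G] [T2Space G]
    [AddCommGroup K] [TopologicalSpace K] [IsTopologicalAddGroup K] [T2Space K]
    [CompactSpace K]
    (hG : IsAlphaPseudocompact α G) (e : G →+ K) (he : IsEmbedding e)
    (hd : DenseRange e) :
    List.TFAE [IsAlphaSingular α G,
      ∃ m : ℕ, 0 < m ∧ (nsmulHom m G).ker ∈ LambdaAlphaAdd α G,
      ∃ N : AddSubgroup G, (∀ x ∈ N, IsOfFinAddOrder x) ∧ IsClosed (N : Set G) ∧
        IsGAlphaSet α (N : Set G),
      ∃ N ∈ LambdaAlphaAdd α G, ∀ x ∈ N, IsOfFinAddOrder x,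
      IsAlphaSingular α K] := by
  classical
  tfae_have 1 → 2 := by
    rintro ⟨m, hm, hw⟩
    refine ⟨m, hm, ?_, ?_⟩
    · -- the kernel is closed
      have h1 : ((nsmulHom m G).ker : Set G) = (fun x : G => m • x) ⁻¹' {0} := by
        ext x
        simp [AddMonoidHom.mem_ker]
        rfl
      rw [h1]
      exact isClosed_singleton.preimage (continuous_nsmul m)
    · -- the kernel is a G_α set
      obtain ⟨B, hB, hBc⟩ := exists_basis_tweight (↥(nsmulHom m G).range)
      have hBcard : #B ≤ α := le_of_eq_of_le hBc hw
      set 𝒰₀ : Set (Set ↥(nsmulHom m G).range) := {U | U ∈ B ∧ (0 : ↥(nsmulHom m G).range) ∈ U}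
        with h𝒰₀
      have hsing : ⋂₀ 𝒰₀ = {(0 : ↥(nsmulHom m G).range)} := by
        apply Set.eq_singleton_iff_unique_mem.2
        constructor
        · exact fun U hU => hU.2
        · intro y hy
          by_contra hy0
          obtain ⟨Vb, hVb, h0V, hVsub⟩ := hB.exists_subset_of_mem_open
            (show (0 : ↥(nsmulHom m G).range) ∈ ({y}ᶜ : Set _) from fun h =>
              hy0 (Set.mem_singleton_iff.1 h).symm) isClosed_singleton.isOpen_compl
          exact hVsub (hy Vb ⟨hVb, h0V⟩) rfl
        -- careful: membership direction
      have hsel : ∀ U ∈ 𝒰₀, ∃ t : Set G, IsOpen t ∧ Subtype.val ⁻¹' t = U :=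
        fun U hU => isOpen_induced_iff.1 (hB.isOpen hU.1)
      choose! t ht1 ht2 using hsel
      set ρ : G → ↥(nsmulHom m G).range := fun g => ⟨m • g, ⟨g, rfl⟩⟩ with hρ
      refine ⟨(fun U => (fun g : G => m • g) ⁻¹' (t U)) '' 𝒰₀, ?_, ?_, ?_⟩
      · rintro S ⟨U, hU, rfl⟩
        exact (ht1 U hU).preimage (continuous_nsmul m)
      · refine Cardinal.mk_image_le.trans ?_
        refine le_trans (Cardinal.mk_le_mk_of_subset ?_) hBcard
        exact fun U hU => hU.1
      · ext x
        simp only [Set.mem_sInter, Set.mem_image, SetLike.mem_coe, AddMonoidHom.mem_ker]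
        constructor
        · intro hx S hS
          obtain ⟨U, hU, rfl⟩ := hS
          have hρ0 : ρ x = 0 := Subtype.ext hx
          have : ρ x ∈ U := by rw [hρ0]; exact hU.2
          rw [← ht2 U hU] at this
          exact this
        · intro hx
          have hρx : ρ x ∈ ⋂₀ 𝒰₀ := by
            intro U hU
            have h1 : m • x ∈ t U := hx _ ⟨U, hU, rfl⟩
            have h2 : ρ x ∈ Subtype.val ⁻¹' (t U) := h1
            rwa [ht2 U hU] at h2
          rw [hsing] at hρx
          have : (ρ x : G) = 0 := by rw [hρx]; rfl
          exact this
  tfae_have 2 → 3 := by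
    rintro ⟨m, hm, hcl, hGa⟩
    refine ⟨(nsmulHom m G).ker, ?_, hcl, hGa⟩
    intro x hx
    exact isOfFinAddOrder_iff_nsmul_eq_zero.2 ⟨m, hm, hx⟩
  tfae_have 3 → 4 := by
    rintro ⟨N, ht, hc, hg⟩
    exact ⟨N, ⟨hc, hg⟩, ht⟩
  tfae_have 4 → 5 := by
    rintro ⟨N, hNmem, hNtor⟩
    exact key_d_to_e hα hG e he hd N hNmem hNtor
  tfae_have 5 → 1 := by
    rintro ⟨m, hm, hw⟩
    refine ⟨m, hm, ?_⟩
    have hυmem : ∀ x : ↥(nsmulHom m G).range, e (x : G) ∈ (nsmulHom m K).range := by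
      rintro ⟨x, g, rfl⟩
      exact ⟨e g, (map_nsmul e m g).symm⟩
    set υ : ↥(nsmulHom m G).range → ↥(nsmulHom m K).range := fun x => ⟨e x, hυmem x⟩ with hυ
    have hcont : Continuous υ :=
      Continuous.subtype_mk (he.continuous.comp continuous_subtype_val) _
    have hemb : IsEmbedding υ := by
      refine IsEmbedding.of_comp hcont continuous_subtype_val ?_
      have hcomp : (Subtype.val ∘ υ) = (⇑e) ∘ (Subtype.val :
          ↥(nsmulHom m G).range → G) := rfl
      rw [hcomp]
      exact he.comp IsEmbedding.subtypeVal
    exact (tweight_le_of_embedding hemb).trans hw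
  tfae_finish
end
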